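/- arXiv:1308.0401 — 3 statements merged into one kernel-verified Lean document; each statement's English description precedes it below -/
import Mathlib

section
/- Let Γ be a finite connected bipartite graph with ordered bipartition (B|B'), G ≤ Aut(Γ), 1 ≠ N ⊴ G, and r ≥ 3 an integer, such that Γ is r-starlike relative to N and locally (G,4)-distance transitive. Then G acts faithfully on B and on B'; the permutation group induced by G on B is transitive of rank 2 or 3; the permutation group induced by G on B' is transitive, imprimitive, and of rank 3; and for each vertex x ∈ B, the permutation group induced by the stabiliser G_x on the neighbourhood Γ(x) is 2-transitive of degree r. -/
open SimpleGraph

section Prelude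

variable {V : Type*}

/-- `g` is an automorphism of the graph `Γ`. -/
def IsGraphAut (Γ : SimpleGraph V) (g : Equiv.Perm V) : Prop :=
  ∀ u v : V, Γ.Adj (g u) (g v) ↔ Γ.Adj u v

/-- `(B | Bᶜ)` is an (ordered) bipartition of `Γ`: every edge joins `B` and `Bᶜ`. -/
def IsBipartition (Γ : SimpleGraph V) (B : Set V) : Prop :=
  ∀ u v : V, Γ.Adj u v → (u ∈ B ↔ v ∉ B)

/-- The orbit of `x` under a subgroup `N` of permutations of `V`. -/
def POrbit (N : Subgroup (Equiv.Perm V)) (x : V) : Set V :=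
  {y | ∃ n ∈ N, n x = y}

/-- `Γ` is locally `(G,s)`-distance transitive: the diameter is at least `s` and for
every vertex `v` and every `1 ≤ i ≤ s` the stabiliser of `v` in `G` is transitive on
the set of vertices at distance `i` from `v`. -/
def LocallyDistTrans (Γ : SimpleGraph V) (G : Subgroup (Equiv.Perm V)) (s : ℕ) : Prop :=
  s ≤ Γ.diam ∧
    ∀ (v x y : V) (i : ℕ), 1 ≤ i → i ≤ s → Γ.dist v x = i → Γ.dist v y = i →
      ∃ g ∈ G, g v = v ∧ g x = y

/-- `Γ`, bipartite with ordered bipartition `(B | Bᶜ)`, is `r`-starlike relative to `N`: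
`N` leaves `B` invariant, is transitive on `B`, and has exactly `r` orbits on `Bᶜ`. -/
def IsStarlike (Γ : SimpleGraph V) (B : Set V) (N : Subgroup (Equiv.Perm V)) (r : ℕ) : Prop :=
  (∀ n ∈ N, ∀ v : V, n v ∈ B ↔ v ∈ B) ∧
    (∀ x ∈ B, ∀ y ∈ B, ∃ n ∈ N, n x = y) ∧
    {S : Set V | ∃ x ∈ Bᶜ, S = POrbit N x}.ncard = r

/-- `G` is transitive on the set `S` of (ordered) pairs. -/
def PairTrans (G : Subgroup (Equiv.Perm V)) (S : Set (V × V)) : Prop :=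
  ∀ p ∈ S, ∀ q ∈ S, ∃ g ∈ G, g p.1 = q.1 ∧ g p.2 = q.2

/-- The adjacency design of the bipartite graph `Γ` with ordered bipartition `(B | Bᶜ)`
(points `B`, blocks `Bᶜ`, incidence = adjacency) is `G`-pairwise transitive. -/
def AdjPT (Γ : SimpleGraph V) (B : Set V) (G : Subgroup (Equiv.Perm V)) : Prop :=
  (∀ g ∈ G, ∀ v : V, g v ∈ B ↔ v ∈ B) ∧
  PairTrans G {p | p.1 ∈ B ∧ p.2 ∈ Bᶜ ∧ Γ.Adj p.1 p.2} ∧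
  PairTrans G {p | p.1 ∈ B ∧ p.2 ∈ Bᶜ ∧ ¬ Γ.Adj p.1 p.2} ∧
  PairTrans G {p | p.1 ∈ B ∧ p.2 ∈ B ∧ p.1 ≠ p.2 ∧ ∃ b ∈ Bᶜ, Γ.Adj p.1 b ∧ Γ.Adj p.2 b} ∧
  PairTrans G {p | p.1 ∈ B ∧ p.2 ∈ B ∧ p.1 ≠ p.2 ∧ ¬ ∃ b ∈ Bᶜ, Γ.Adj p.1 b ∧ Γ.Adj p.2 b} ∧
  PairTrans G {p | p.1 ∈ Bᶜ ∧ p.2 ∈ Bᶜ ∧ p.1 ≠ p.2 ∧ ∃ x ∈ B, Γ.Adj x p.1 ∧ Γ.Adj x p.2} ∧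
  PairTrans G {p | p.1 ∈ Bᶜ ∧ p.2 ∈ Bᶜ ∧ p.1 ≠ p.2 ∧ ¬ ∃ x ∈ B, Γ.Adj x p.1 ∧ Γ.Adj x p.2}

/-- The adjacency design of `Γ` (points `B`, blocks `Bᶜ`) is `N`-nicely affine:
`N` acts as automorphisms preserving the biparts, transitively on points, and there is a
constant `μ` such that distinct blocks in different `N`-orbits have exactly `μ` common
points, while distinct blocks in the same `N`-orbit have no common point. -/
def AdjNA (Γ : SimpleGraph V) (B : Set V) (N : Subgroup (Equiv.Perm V)) : Prop :=
  (∀ n ∈ N, ∀ v : V, n v ∈ B ↔ v ∈ B) ∧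
  (∀ x ∈ B, ∀ y ∈ B, ∃ n ∈ N, n x = y) ∧
  ∃ μ : ℕ, ∀ b ∈ Bᶜ, ∀ b' ∈ Bᶜ, b ≠ b' →
    ((b' ∈ POrbit N b → ¬ ∃ x, Γ.Adj x b ∧ Γ.Adj x b') ∧
     (b' ∉ POrbit N b → {x | Γ.Adj x b ∧ Γ.Adj x b'}.ncard = μ))

/-- The adjacency design of `Γ` (points `B`, blocks `Bᶜ`) is affine: the blocks can be
partitioned into parallel classes, and there is a positive constant `μ` such that blocks
in distinct parallel classes have exactly `μ` common points. -/
def AdjAffine (Γ : SimpleGraph V) (B : Set V) : Prop :=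
  ∃ 𝓒 : Set (Set V), (∀ C ∈ 𝓒, C ⊆ Bᶜ) ∧ (∀ b ∈ Bᶜ, ∃! C, C ∈ 𝓒 ∧ b ∈ C) ∧
    (∀ C ∈ 𝓒, ∀ x ∈ B, ∃! b, b ∈ C ∧ Γ.Adj x b) ∧
    ∃ μ : ℕ, 0 < μ ∧ ∀ C ∈ 𝓒, ∀ C' ∈ 𝓒, C ≠ C' → ∀ b ∈ C, ∀ b' ∈ C',
      {x | Γ.Adj x b ∧ Γ.Adj x b'}.ncard = μ

end Prelude

section DesignPrelude

variable {P L : Type*}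

/-- The design `(P, L, I)` is `G`-pairwise transitive. -/
def DesignPT (I : P → L → Prop) (G : Type*) [Group G] [MulAction G P] [MulAction G L] :
    Prop :=
  (∀ (x : P) (b : L) (x' : P) (b' : L), I x b → I x' b' →
      ∃ g : G, g • x = x' ∧ g • b = b') ∧
  (∀ (x : P) (b : L) (x' : P) (b' : L), ¬ I x b → ¬ I x' b' →
      ∃ g : G, g • x = x' ∧ g • b = b') ∧
  (∀ x y x' y' : P, x ≠ y → x' ≠ y' → (∃ b, I x b ∧ I y b) → (∃ b, I x' b ∧ I y' b) →
      ∃ g : G, g • x = x' ∧ g • y = y') ∧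
  (∀ x y x' y' : P, x ≠ y → x' ≠ y' → ¬ (∃ b, I x b ∧ I y b) → ¬ (∃ b, I x' b ∧ I y' b) →
      ∃ g : G, g • x = x' ∧ g • y = y') ∧
  (∀ b c b' c' : L, b ≠ c → b' ≠ c' → (∃ x, I x b ∧ I x c) → (∃ x, I x b' ∧ I x c') →
      ∃ g : G, g • b = b' ∧ g • c = c') ∧
  (∀ b c b' c' : L, b ≠ c → b' ≠ c' → ¬ (∃ x, I x b ∧ I x c) → ¬ (∃ x, I x b' ∧ I x c') →
      ∃ g : G, g • b = b' ∧ g • c = c')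

/-- The design `(P, L, I)` is `N`-nicely affine for the subgroup `N` of `G`. -/
def DesignNA (I : P → L → Prop) (G : Type*) [Group G] [MulAction G P] [MulAction G L]
    (N : Subgroup G) : Prop :=
  (∀ x y : P, ∃ n ∈ N, n • x = y) ∧
  ∃ μ : ℕ, ∀ b b' : L, b ≠ b' →
    (((∃ n ∈ N, n • b = b') → ¬ ∃ x, I x b ∧ I x b') ∧
     ((¬ ∃ n ∈ N, n • b = b') → {x | I x b ∧ I x b'}.ncard = μ))

/-- The incidence graph of the design `(P, L, I)`. -/
def DIncGraph (I : P → L → Prop) : SimpleGraph (P ⊕ L) :=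
  SimpleGraph.fromRel (fun a b => ∃ x s, a = Sum.inl x ∧ b = Sum.inr s ∧ I x s)

end DesignPrelude

section SetDesign

variable {V : Type*}

/-- Pairwise transitivity for a design whose points are the elements of `V`, whose
blocks are the members of `𝓑` (identified with their point-sets) and whose
incidence relation is membership; `G` is a group of permutations of `V`. -/
def SetPT (𝓑 : Set (Set V)) (G : Subgroup (Equiv.Perm V)) : Prop :=
  (∀ x : V, ∀ s ∈ 𝓑, ∀ x' : V, ∀ s' ∈ 𝓑, x ∈ s → x' ∈ s' →
      ∃ g ∈ G, g x = x' ∧ (fun z => g z) '' s = s') ∧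
  (∀ x : V, ∀ s ∈ 𝓑, ∀ x' : V, ∀ s' ∈ 𝓑, x ∉ s → x' ∉ s' →
      ∃ g ∈ G, g x = x' ∧ (fun z => g z) '' s = s') ∧
  (∀ x y x' y' : V, x ≠ y → x' ≠ y' → (∃ s ∈ 𝓑, x ∈ s ∧ y ∈ s) → (∃ s ∈ 𝓑, x' ∈ s ∧ y' ∈ s) →
      ∃ g ∈ G, g x = x' ∧ g y = y') ∧
  (∀ x y x' y' : V, x ≠ y → x' ≠ y' → ¬ (∃ s ∈ 𝓑, x ∈ s ∧ y ∈ s) → ¬ (∃ s ∈ 𝓑, x' ∈ s ∧ y' ∈ s) →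
      ∃ g ∈ G, g x = x' ∧ g y = y') ∧
  (∀ s ∈ 𝓑, ∀ t ∈ 𝓑, ∀ s' ∈ 𝓑, ∀ t' ∈ 𝓑, s ≠ t → s' ≠ t' →
      (s ∩ t).Nonempty → (s' ∩ t').Nonempty →
      ∃ g ∈ G, (fun z => g z) '' s = s' ∧ (fun z => g z) '' t = t') ∧
  (∀ s ∈ 𝓑, ∀ t ∈ 𝓑, ∀ s' ∈ 𝓑, ∀ t' ∈ 𝓑, s ≠ t → s' ≠ t' →
      s ∩ t = ∅ → s' ∩ t' = ∅ →
      ∃ g ∈ G, (fun z => g z) '' s = s' ∧ (fun z => g z) '' t = t')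

/-- Nice affineness for a design with point set `V`, blocks `𝓑` (point-sets) and
incidence given by membership, relative to a permutation group `N`. -/
def SetNA (𝓑 : Set (Set V)) (N : Subgroup (Equiv.Perm V)) : Prop :=
  (∀ x y : V, ∃ n ∈ N, n x = y) ∧
  (∀ n ∈ N, ∀ s ∈ 𝓑, (fun z => n z) '' s ∈ 𝓑) ∧
  ∃ μ : ℕ, ∀ s ∈ 𝓑, ∀ s' ∈ 𝓑, s ≠ s' →
    (((∃ n ∈ N, (fun z => n z) '' s = s') → s ∩ s' = ∅) ∧
     ((¬ ∃ n ∈ N, (fun z => n z) '' s = s') → (s ∩ s').ncard = μ))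

end SetDesign

section QuotientGraph

variable {V : Type*}

/-- The setoid on vertices whose classes are the `N`-orbits. -/
def orbitSetoid (N : Subgroup (Equiv.Perm V)) : Setoid V where
  r x y := ∃ n ∈ N, n x = y
  iseqv := by
    refine ⟨fun x => ⟨1, N.one_mem, rfl⟩, ?_, ?_⟩
    · rintro x y ⟨n, hn, rfl⟩
      exact ⟨n⁻¹, N.inv_mem hn, by simp⟩
    · rintro x y z ⟨n, hn, rfl⟩ ⟨m, hm, rfl⟩
      exact ⟨m * n, N.mul_mem hm hn, rfl⟩

/-- The normal quotient graph `Γ_N`: vertices are the `N`-orbits, two distinct orbits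
being adjacent iff some vertex of one is adjacent to some vertex of the other. -/
def quotGraph (Γ : SimpleGraph V) (N : Subgroup (Equiv.Perm V)) :
    SimpleGraph (Quotient (orbitSetoid N)) :=
  SimpleGraph.fromRel (fun a b => ∃ x y : V, Γ.Adj x y ∧
    Quotient.mk (orbitSetoid N) x = a ∧ Quotient.mk (orbitSetoid N) y = b)

end QuotientGraph

section Subdivision

variable {W : Type*}

/-- The subdivision graph `S(Σ)` of a graph `Σ`: vertices are `EΣ ⊕ VΣ`, an edge
being adjacent to its endpoints. -/
def SubdivisionGraph (Sg : SimpleGraph W) : SimpleGraph (↥Sg.edgeSet ⊕ W) :=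
  SimpleGraph.fromRel (fun a b => ∃ (e : Sg.edgeSet) (w : W),
    a = Sum.inl e ∧ b = Sum.inr w ∧ w ∈ (e : Sym2 W))

/-- The graph on `B'` in which two vertices are adjacent iff they are at distance `2`
in `Γ`. -/
def distTwoGraph (Γ : SimpleGraph W) (B' : Set W) : SimpleGraph ↥B' where
  Adj a b := Γ.dist ↑a ↑b = 2
  symm := by
    constructor
    intro a b h
    rwa [SimpleGraph.dist_comm]
  loopless := by
    constructor
    intro a h
    simp [SimpleGraph.dist_self] at h

/-- `f 0, f 1, …, f t` is a `t`-arc of `Sg`. -/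
def IsArcOf (Sg : SimpleGraph W) (t : ℕ) (f : ℕ → W) : Prop :=
  (∀ i : ℕ, i < t → Sg.Adj (f i) (f (i + 1))) ∧
  (∀ i : ℕ, 1 ≤ i → i + 1 ≤ t → f (i - 1) ≠ f (i + 1))

end Subdivision

section Aux

variable {V : Type*} {Γ : SimpleGraph V} {B : Set V}

lemma Equiv.Perm.apply_inv_self (f : Equiv.Perm V) (x : V) : f (f⁻¹ x) = x :=
  f.apply_symm_apply x

lemma Equiv.Perm.inv_apply_self (f : Equiv.Perm V) (x : V) : f⁻¹ (f x) = x :=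
  f.symm_apply_apply x

lemma walk_parity (hbip : ∀ u v : V, Γ.Adj u v → (u ∈ B ↔ v ∉ B)) :
    ∀ {u v : V} (w : Γ.Walk u v), ((u ∈ B) ↔ (v ∈ B)) ↔ Even w.length := by
  intro u v w
  induction w with
  | nil => simp
  | cons h p ih =>
    have h1 := hbip _ _ h
    simp only [SimpleGraph.Walk.length_cons, Nat.even_add_one]
    tauto

lemma dist_parity (hconn : Γ.Connected)
    (hbip : ∀ u v : V, Γ.Adj u v → (u ∈ B ↔ v ∉ B)) (u v : V) :
    ((u ∈ B) ↔ (v ∈ B)) ↔ Even (Γ.dist u v) := by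
  obtain ⟨w, hw⟩ := hconn.exists_walk_length_eq_dist u v
  rw [← hw]
  exact walk_parity hbip w

lemma aut_walk {g : Equiv.Perm V} (hg : ∀ u v : V, Γ.Adj (g u) (g v) ↔ Γ.Adj u v)
    {u v : V} (w : Γ.Walk u v) : ∃ w' : Γ.Walk (g u) (g v), w'.length = w.length := by
  refine ⟨w.map ⟨(g : V → V), fun h => (hg _ _).mpr h⟩, ?_⟩
  simp

lemma aut_dist_le {g : Equiv.Perm V} (hconn : Γ.Connected)
    (hg : ∀ u v : V, Γ.Adj (g u) (g v) ↔ Γ.Adj u v) (u v : V) :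
    Γ.dist (g u) (g v) ≤ Γ.dist u v := by
  obtain ⟨w, hw⟩ := hconn.exists_walk_length_eq_dist u v
  obtain ⟨w', hw'⟩ := aut_walk hg w
  calc Γ.dist (g u) (g v) ≤ w'.length := SimpleGraph.dist_le w'
    _ = Γ.dist u v := by rw [hw', hw]

lemma aut_inv {g : Equiv.Perm V} (hg : ∀ u v : V, Γ.Adj (g u) (g v) ↔ Γ.Adj u v) :
    ∀ u v : V, Γ.Adj (g⁻¹ u) (g⁻¹ v) ↔ Γ.Adj u v := by
  intro u v
  conv_rhs => rw [← g.apply_inv_self u, ← g.apply_inv_self v]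
  exact (hg _ _).symm

lemma aut_dist {g : Equiv.Perm V} (hconn : Γ.Connected)
    (hg : ∀ u v : V, Γ.Adj (g u) (g v) ↔ Γ.Adj u v) (u v : V) :
    Γ.dist (g u) (g v) = Γ.dist u v := by
  refine le_antisymm (aut_dist_le hconn hg u v) ?_
  have := aut_dist_le hconn (aut_inv hg) (g u) (g v)
  simpa using this

lemma dist_pred (hconn : Γ.Connected) {u v : V} {k : ℕ} (h : Γ.dist u v = k + 1) :
    ∃ w, Γ.Adj w v ∧ Γ.dist u w = k := by
  obtain ⟨p, hp⟩ := hconn.exists_walk_length_eq_dist u v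
  have hq : p.reverse.length = k + 1 := by rw [SimpleGraph.Walk.length_reverse, hp, h]
  cases hq' : p.reverse with
  | nil => rw [hq'] at hq; simp at hq
  | cons hadj q =>
    rename_i w'
    rw [hq'] at hq
    simp only [SimpleGraph.Walk.length_cons] at hq
    refine ⟨w', hadj.symm, ?_⟩
    have hlq : q.length = k := by omega
    have h1 : Γ.dist u w' ≤ k := by
      have := SimpleGraph.dist_le q.reverse
      rwa [SimpleGraph.Walk.length_reverse, hlq] at this
    have h2 : Γ.dist u v ≤ Γ.dist u w' + 1 := by
      have htr := hconn.dist_triangle (u := u) (v := w') (w := v)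
      have : Γ.dist w' v ≤ 1 := by
        have := SimpleGraph.dist_le (SimpleGraph.Walk.cons hadj.symm SimpleGraph.Walk.nil)
        simpa using this
      omega
    omega

lemma exists_dist_three (hconn : Γ.Connected) {u v : V} (h : 3 ≤ Γ.dist u v) :
    ∃ w, Γ.dist u w = 3 := by
  obtain ⟨j, hj⟩ : ∃ j, Γ.dist u v = j + 3 := ⟨Γ.dist u v - 3, by omega⟩
  clear h
  induction j generalizing v with
  | zero => exact ⟨v, by simpa using hj⟩
  | succ j ih =>
    have hj' : Γ.dist u v = (j + 3) + 1 := by omega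
    obtain ⟨w, _, hw2⟩ := dist_pred hconn hj'
    exact ih hw2

lemma dist_mid (hconn : Γ.Connected) {u v : V} (h : Γ.dist u v = 2) :
    ∃ w, Γ.Adj u w ∧ Γ.Adj w v := by
  obtain ⟨w, h1, h2⟩ := dist_pred hconn (k := 1) h
  exact ⟨w, SimpleGraph.dist_eq_one_iff_adj.mp h2, h1⟩

lemma dist_two_of (hconn : Γ.Connected) {u v w : V} (hne : u ≠ v) (hna : ¬ Γ.Adj u v)
    (h1 : Γ.Adj u w) (h2 : Γ.Adj w v) : Γ.dist u v = 2 := by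
  have hle : Γ.dist u v ≤ 2 := by
    have := SimpleGraph.dist_le (SimpleGraph.Walk.cons h1 (SimpleGraph.Walk.cons h2 SimpleGraph.Walk.nil))
    simpa using this
  have h0 : Γ.dist u v ≠ 0 := fun h => hne (hconn.dist_eq_zero_iff.mp h)
  have h1' : Γ.dist u v ≠ 1 := fun h => hna (SimpleGraph.dist_eq_one_iff_adj.mp h)
  omega

end Aux

/-- **Theorem 2** (Theorem `properties`).  If `Γ`, `G`, `N` satisfy the equivalent
conditions of the main theorem, then `G` acts faithfully on `B` and on `B' = Bᶜ`,
`G` is transitive of rank `2` or `3` on `B`, transitive, imprimitive and of rank `3`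
on `Bᶜ`, and for `x ∈ B` the stabiliser `G_x` induces a `2`-transitive group of degree
`r` on the neighbourhood `Γ(x)`. -/
theorem statement1 {V : Type*} [Fintype V] (Γ : SimpleGraph V) (B : Set V)
    (hconn : Γ.Connected) (hbip : IsBipartition Γ B)
    (G N : Subgroup (Equiv.Perm V)) (hGaut : ∀ g ∈ G, IsGraphAut Γ g)
    (hNG : N ≤ G) (hN1 : N ≠ ⊥) (hnorm : ∀ g ∈ G, ∀ n ∈ N, g * n * g⁻¹ ∈ N)
    (r : ℕ) (hr : 3 ≤ r)
    (hstar : IsStarlike Γ B N r) (hldt : LocallyDistTrans Γ G 4) :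
    -- G acts faithfully on B and on B'
    (∀ g ∈ G, (∀ x ∈ B, g x = x) → g = 1) ∧
    (∀ g ∈ G, (∀ x ∈ Bᶜ, g x = x) → g = 1) ∧
    -- G preserves the biparts
    (∀ g ∈ G, ∀ v : V, g v ∈ B ↔ v ∈ B) ∧
    -- G is transitive on B, of rank 2 or 3
    (∀ x ∈ B, ∀ y ∈ B, ∃ g ∈ G, g x = y) ∧
    (∀ x ∈ B,
      {S : Set V | ∃ y ∈ B, S = {z | ∃ g ∈ G, g x = x ∧ g y = z}}.ncard ∈ ({2, 3} : Set ℕ)) ∧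
    -- G is transitive on B', of rank 3
    (∀ b ∈ Bᶜ, ∀ b' ∈ Bᶜ, ∃ g ∈ G, g b = b') ∧
    (∀ b ∈ Bᶜ,
      {S : Set V | ∃ c ∈ Bᶜ, S = {d | ∃ g ∈ G, g b = b ∧ g c = d}}.ncard = 3) ∧
    -- G is imprimitive on B': it preserves a nontrivial partition of B'
    (∃ 𝓟 : Set (Set V), (∀ C ∈ 𝓟, C ⊆ Bᶜ ∧ 2 ≤ C.ncard) ∧ 2 ≤ 𝓟.ncard ∧
      (∀ b ∈ Bᶜ, ∃! C, C ∈ 𝓟 ∧ b ∈ C) ∧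
      (∀ g ∈ G, ∀ C ∈ 𝓟, (fun z => g z) '' C ∈ 𝓟)) ∧
    -- the stabiliser of x ∈ B is 2-transitive of degree r on Γ(x)
    (∀ x ∈ B, (Γ.neighborSet x).ncard = r ∧
      ∀ y ∈ Γ.neighborSet x, ∀ z ∈ Γ.neighborSet x,
        ∀ y' ∈ Γ.neighborSet x, ∀ z' ∈ Γ.neighborSet x, y ≠ z → y' ≠ z' →
          ∃ g ∈ G, g x = x ∧ g y = y' ∧ g z = z') := by
  haveI : Nonempty V := hconn.nonempty
  -- a pair of vertices at distance ≥ 4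
  obtain ⟨u₀, v₀, hd₀⟩ : ∃ u v : V, 4 ≤ Γ.dist u v := by
    obtain ⟨u, v, huv⟩ := Γ.exists_dist_eq_diam
    exact ⟨u, v, by rw [huv]; exact hldt.1⟩
  -- every vertex has a neighbour
  have hnbr : ∀ v : V, ∃ w, Γ.Adj v w := by
    intro v
    by_contra hno
    push_neg at hno
    have hall : ∀ w : V, w = v := by
      intro w
      by_contra hne
      obtain ⟨p⟩ := hconn.preconnected v w
      cases p with
      | nil => exact hne rfl
      | cons h q => exact hno _ h
    rw [hall u₀, hall v₀] at hd₀
    simp [SimpleGraph.dist_self] at hd₀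
  -- membership moves across edges
  have hBmem : ∀ {a b : V}, Γ.Adj a b → a ∈ B → b ∈ Bᶜ := by
    intro a b hab ha
    exact (hbip a b hab).mp ha
  have hB'mem : ∀ {a b : V}, Γ.Adj a b → a ∈ Bᶜ → b ∈ B := by
    intro a b hab ha
    by_contra hb
    exact ha ((hbip a b hab).mpr hb)
  have hnoB'B' : ∀ {a b : V}, a ∈ Bᶜ → b ∈ Bᶜ → ¬ Γ.Adj a b := by
    intro a b ha hb hab
    exact hb (hB'mem hab ha)
  have hnoBB : ∀ {a b : V}, a ∈ B → b ∈ B → ¬ Γ.Adj a b := by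
    intro a b ha hb hab
    exact (hBmem hab ha) hb
  -- nonemptiness
  have hB'ne : Bᶜ.Nonempty := by
    by_contra hem
    rw [Set.not_nonempty_iff_eq_empty] at hem
    have : {S : Set V | ∃ x ∈ Bᶜ, S = POrbit N x} = ∅ := by
      ext S; simp [hem]
    have h3 := hstar.2.2
    rw [this, Set.ncard_empty] at h3
    omega
  have hBne : B.Nonempty := by
    obtain ⟨b, hb⟩ := hB'ne
    obtain ⟨w, hw⟩ := hnbr b
    exact ⟨w, hB'mem hw hb⟩
  -- orbit utilities
  have horbself : ∀ a : V, a ∈ POrbit N a := fun a => ⟨1, N.one_mem, rfl⟩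
  have horbsymm : ∀ {a b : V}, b ∈ POrbit N a → a ∈ POrbit N b := by
    rintro a b ⟨n, hn, rfl⟩
    exact ⟨n⁻¹, N.inv_mem hn, n.inv_apply_self a⟩
  have horbtrans : ∀ {a b c : V}, b ∈ POrbit N a → c ∈ POrbit N b → c ∈ POrbit N a := by
    rintro a b c ⟨n, hn, rfl⟩ ⟨m, hm, rfl⟩
    exact ⟨m * n, N.mul_mem hm hn, rfl⟩
  have horbeq : ∀ {a b : V}, b ∈ POrbit N a → POrbit N a = POrbit N b := by
    intro a b hb
    ext c
    constructor
    · intro hc; exact horbtrans (horbsymm hb) hc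
    · intro hc; exact horbtrans hb hc
  have hmov : ∀ g ∈ G, ∀ {a c : V}, c ∈ POrbit N a → g c ∈ POrbit N (g a) := by
    rintro g hg a c ⟨n, hn, rfl⟩
    refine ⟨g * n * g⁻¹, hnorm g hg n hn, ?_⟩
    simp [Equiv.Perm.mul_apply]
  have horbB' : ∀ {b : V}, b ∈ Bᶜ → POrbit N b ⊆ Bᶜ := by
    rintro b hb c ⟨n, hn, rfl⟩
    intro hc
    exact hb ((hstar.1 n hn b).mp hc)
  -- parity facts
  have hpar := dist_parity hconn hbip
  have hevenB'B' : ∀ {b c : V}, b ∈ Bᶜ → c ∈ Bᶜ → Even (Γ.dist b c) := by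
    intro b c hb hc
    exact (hpar b c).mp (by constructor <;> (intro h; tauto))
  have hevenBB : ∀ {b c : V}, b ∈ B → c ∈ B → Even (Γ.dist b c) := by
    intro b c hb hc
    exact (hpar b c).mp (by tauto)
  have hoddBB' : ∀ {b c : V}, b ∈ B → c ∈ Bᶜ → ¬ Even (Γ.dist b c) := by
    intro b c hb hc h
    have := (hpar b c).mpr h
    tauto
  -- G preserves the bipartition
  have hGB : ∀ g ∈ G, ∀ v : V, g v ∈ B ↔ v ∈ B := by
    intro g hg
    obtain ⟨x₀, hx₀⟩ := hBne
    have hkey : ∀ v : V, ((x₀ ∈ B) ↔ (v ∈ B)) ↔ ((g x₀ ∈ B) ↔ (g v ∈ B)) := by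
      intro v
      obtain ⟨w⟩ := hconn.preconnected x₀ v
      obtain ⟨w', hw'⟩ := aut_walk (hGaut g hg) w
      rw [walk_parity hbip w, walk_parity hbip w', hw']
    by_cases hgx : g x₀ ∈ B
    · intro v
      have := hkey v
      tauto
    · exfalso
      have hswap : ∀ v : V, v ∈ B ↔ g v ∉ B := by
        intro v; have := hkey v; tauto
      have htrans' : ∀ u ∈ Bᶜ, ∀ w ∈ Bᶜ, ∃ m ∈ N, m u = w := by
        intro u hu w hw
        rw [Set.mem_compl_iff] at hu hw
        have hu' : g⁻¹ u ∈ B := by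
          have := hswap (g⁻¹ u)
          rw [g.apply_inv_self] at this
          tauto
        have hw' : g⁻¹ w ∈ B := by
          have := hswap (g⁻¹ w)
          rw [g.apply_inv_self] at this
          tauto
        obtain ⟨n, hn, hnx⟩ := hstar.2.1 _ hu' _ hw'
        refine ⟨g * n * g⁻¹, hnorm g hg n hn, ?_⟩
        rw [Equiv.Perm.mul_apply, Equiv.Perm.mul_apply, hnx, g.apply_inv_self]
      obtain ⟨b₀, hb₀⟩ := hB'ne
      have horb1 : {S : Set V | ∃ x ∈ Bᶜ, S = POrbit N x} = {Bᶜ} := by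
        ext S
        simp only [Set.mem_setOf_eq, Set.mem_singleton_iff]
        constructor
        · rintro ⟨x, hx, rfl⟩
          ext c
          constructor
          · intro hc; exact horbB' hx hc
          · intro hc; exact htrans' x hx c hc
        · rintro rfl
          refine ⟨b₀, hb₀, ?_⟩
          ext c
          constructor
          · intro hc; exact htrans' b₀ hb₀ c hc
          · intro hc; exact horbB' hb₀ hc
      have h3 := hstar.2.2
      rw [horb1, Set.ncard_singleton] at h3
      omega
  -- twin-freeness
  have htwin : ∀ a a' : V, a ≠ a' → (∀ w, Γ.Adj a w ↔ Γ.Adj a' w) → False := by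
    intro a a' hne hsame
    have hnadj : ¬ Γ.Adj a a' := by
      intro h
      exact Γ.loopless.irrefl a' ((hsame a').mp h)
    obtain ⟨w, hw⟩ := hnbr a'
    have haw : Γ.Adj a w := (hsame w).mpr hw
    have hd2 : Γ.dist a a' = 2 := dist_two_of hconn hne hnadj haw hw.symm
    have hprop : ∀ c, Γ.dist a c = 2 → ∀ w', Γ.Adj a w' ↔ Γ.Adj c w' := by
      intro c hc w'
      obtain ⟨g, hg, hga, hga'⟩ := hldt.2 a a' c 2 (by omega) (by omega) hd2 hc
      have hgaut := hGaut g hg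
      have e1 : Γ.Adj c w' ↔ Γ.Adj a' (g⁻¹ w') := by
        conv_lhs => rw [← hga', ← g.apply_inv_self w']
        exact hgaut a' (g⁻¹ w')
      have e2 : Γ.Adj a w' ↔ Γ.Adj a (g⁻¹ w') := by
        conv_lhs => rw [← hga, ← g.apply_inv_self w']
        exact hgaut a (g⁻¹ w')
      rw [e2, e1]
      exact hsame (g⁻¹ w')
    have h3 : ∀ c, Γ.dist a c ≠ 3 := by
      intro c hc
      obtain ⟨w', hadj, hw2⟩ := dist_pred hconn (k := 2) hc
      have hac : Γ.Adj a c := (hprop w' hw2 c).mpr hadj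
      have := SimpleGraph.dist_eq_one_iff_adj.mpr hac
      omega
    have hle2 : ∀ v, Γ.dist a v ≤ 2 := by
      intro v
      by_contra h
      push_neg at h
      obtain ⟨w', hw3⟩ := exists_dist_three hconn (by omega : 3 ≤ Γ.dist a v)
      exact h3 w' hw3
    have hclass : ∀ v, v ≠ a → ¬ Γ.Adj a v → ∀ w', Γ.Adj a w' ↔ Γ.Adj v w' := by
      intro v hv hnv
      have hd : Γ.dist a v = 2 := by
        have := hle2 v
        have h0 : Γ.dist a v ≠ 0 := fun h => hv (hconn.dist_eq_zero_iff.mp h).symm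
        have h1 : Γ.dist a v ≠ 1 := fun h => hnv (SimpleGraph.dist_eq_one_iff_adj.mp h)
        omega
      exact hprop v hd
    have hAn : ∀ z, z ≠ a → ¬ Γ.Adj a z → Γ.Adj z w :=
      fun z hz hnz => ((hclass z hz hnz w).mp haw)
    have hglob : ∀ u v : V, Γ.dist u v ≤ 2 := by
      intro u v
      by_cases huv : u = v
      · simp [huv, SimpleGraph.dist_self]
      by_cases hadj : Γ.Adj u v
      · rw [SimpleGraph.dist_eq_one_iff_adj.mpr hadj]; omega
      have key : ∃ z, Γ.Adj u z ∧ Γ.Adj z v := by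
        by_cases hu : u = a
        · subst hu
          by_cases hav : Γ.Adj u v
          · exact absurd hav hadj
          · exact ⟨w, haw, (hAn v (fun h => huv h.symm) hav).symm⟩
        by_cases hv : v = a
        · subst hv
          have hnu : ¬ Γ.Adj v u := fun h => hadj h.symm
          exact ⟨w, hAn u hu hnu, haw.symm⟩
        by_cases hau : Γ.Adj a u
        · by_cases hav : Γ.Adj a v
          · exact ⟨a, hau.symm, hav⟩
          · exact absurd ((hclass v hv hav u).mp hau).symm hadj
        · by_cases hav : Γ.Adj a v
          · exact absurd ((hclass u hu hau v).mp hav) hadj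
          · exact ⟨w, hAn u hu hau, (hAn v hv hav).symm⟩
      obtain ⟨z, hz1, hz2⟩ := key
      have := SimpleGraph.dist_le (SimpleGraph.Walk.cons hz1 (SimpleGraph.Walk.cons hz2 SimpleGraph.Walk.nil))
      simpa using this
    have := hglob u₀ v₀
    omega
  -- faithfulness on B
  have hfaithB : ∀ g ∈ G, (∀ x ∈ B, g x = x) → g = 1 := by
    intro g hg hfix
    have hfixB' : ∀ b ∈ Bᶜ, g b = b := by
      intro b hb
      by_contra hne
      refine htwin b (g b) (fun h => hne h.symm) ?_
      intro w
      constructor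
      · intro h
        have hwB : w ∈ B := hB'mem h hb
        have := (hGaut g hg b w).mpr h
        rwa [hfix w hwB] at this
      · intro h
        have hgb : g b ∈ Bᶜ := by
          rw [Set.mem_compl_iff]
          intro hc
          exact hb ((hGB g hg b).mp hc)
        have hwB : w ∈ B := hB'mem h hgb
        have h2 : Γ.Adj (g b) (g w) := by rwa [hfix w hwB]
        exact (hGaut g hg b w).mp h2
    ext v
    by_cases hv : v ∈ B
    · simp [hfix v hv]
    · simp [hfixB' v hv]
  -- faithfulness on B'
  have hfaithB' : ∀ g ∈ G, (∀ x ∈ Bᶜ, g x = x) → g = 1 := by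
    intro g hg hfix
    have hfixB : ∀ x ∈ B, g x = x := by
      intro x hx
      by_contra hne
      refine htwin x (g x) (fun h => hne h.symm) ?_
      intro w
      constructor
      · intro h
        have hwB : w ∈ Bᶜ := hBmem h hx
        have := (hGaut g hg x w).mpr h
        rwa [hfix w hwB] at this
      · intro h
        have hgx : g x ∈ B := (hGB g hg x).mpr hx
        have hwB : w ∈ Bᶜ := hBmem h hgx
        have h2 : Γ.Adj (g x) (g w) := by rwa [hfix w hwB]
        exact (hGaut g hg x w).mp h2
    ext v
    by_cases hv : v ∈ B
    · simp [hfixB v hv]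
    · simp [hfix v hv]
  -- G is transitive on B'
  have hGtransB' : ∀ b ∈ Bᶜ, ∀ b' ∈ Bᶜ, ∃ g ∈ G, g b = b' := by
    intro b hb b' hb'
    obtain ⟨x, hx⟩ := hnbr b
    obtain ⟨x', hx'⟩ := hnbr b'
    have hxB : x ∈ B := hB'mem hx hb
    have hx'B : x' ∈ B := hB'mem hx' hb'
    obtain ⟨n, hn, hnx⟩ := hstar.2.1 x hxB x' hx'B
    have hnb : Γ.Adj x' (n b) := by
      have := (hGaut n (hNG hn) x b).mpr hx.symm
      rwa [hnx] at this
    have hd1 : Γ.dist x' (n b) = 1 := SimpleGraph.dist_eq_one_iff_adj.mpr hnb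
    have hd1' : Γ.dist x' b' = 1 := SimpleGraph.dist_eq_one_iff_adj.mpr hx'.symm
    obtain ⟨g, hg, _, hgb⟩ := hldt.2 x' (n b) b' 1 (by omega) (by omega) hd1 hd1'
    refine ⟨g * n, G.mul_mem hg (hNG hn), ?_⟩
    rw [Equiv.Perm.mul_apply, hgb]
  have msymm : ∀ {a b : V}, (∃ x, Γ.Adj x a ∧ Γ.Adj x b) → ∃ x, Γ.Adj x b ∧ Γ.Adj x a :=
    fun ⟨x, h1, h2⟩ => ⟨x, h2, h1⟩
  have hB'memR : ∀ {a b : V}, Γ.Adj a b → b ∈ Bᶜ → a ∈ B := fun h hb => hB'mem h.symm hb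
  -- existence of a block in another class
  have hother : ∀ b ∈ Bᶜ, ∃ d, d ∈ Bᶜ ∧ d ∉ POrbit N b := by
    intro b hb
    by_contra h
    push_neg at h
    have hsub : {S : Set V | ∃ x ∈ Bᶜ, S = POrbit N x} ⊆ {POrbit N b} := by
      rintro S ⟨x, hx, rfl⟩
      simp only [Set.mem_singleton_iff]
      exact (horbeq (h x hx)).symm
    have h1 := Set.ncard_le_ncard hsub (Set.finite_singleton _)
    rw [Set.ncard_singleton] at h1
    have h2 := hstar.2.2
    omega
  -- existence of a block in a third class
  have hthird : ∀ b ∈ Bᶜ, ∀ c ∈ Bᶜ, ∃ d, d ∈ Bᶜ ∧ d ∉ POrbit N b ∧ d ∉ POrbit N c := by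
    intro b hb c hc
    by_contra h
    push_neg at h
    have hsub : {S : Set V | ∃ x ∈ Bᶜ, S = POrbit N x} ⊆ {POrbit N b, POrbit N c} := by
      rintro S ⟨x, hx, rfl⟩
      rcases Classical.em (x ∈ POrbit N b) with hxb | hxb
      · exact Or.inl (horbeq hxb).symm
      · exact Or.inr (horbeq (h x hx hxb)).symm
    have h1 := Set.ncard_le_ncard hsub ((Set.finite_singleton _).insert _)
    have h2 : ({POrbit N b, POrbit N c} : Set (Set V)).ncard ≤ 2 := by
      have := Set.ncard_insert_le (POrbit N b) {POrbit N c}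
      rw [Set.ncard_singleton] at this
      omega
    have h3 := hstar.2.2
    omega
  -- every point has a neighbour in every class
  have hmeetB' : ∀ x ∈ B, ∀ c ∈ Bᶜ, ∃ e, Γ.Adj x e ∧ e ∈ POrbit N c := by
    intro x hx c hc
    obtain ⟨x₀, hx₀adj⟩ := hnbr c
    have hx₀B : x₀ ∈ B := hB'mem hx₀adj hc
    obtain ⟨n, hn, hnx⟩ := hstar.2.1 x₀ hx₀B x hx
    refine ⟨n c, ?_, ⟨n, hn, rfl⟩⟩
    have := (hGaut n (hNG hn) x₀ c).mpr hx₀adj.symm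
    rwa [hnx] at this
  -- distinct blocks in the same class are disjoint
  have hdisj : ∀ b ∈ Bᶜ, ∀ b', b' ∈ POrbit N b → b' ≠ b → ∀ x, ¬ (Γ.Adj x b ∧ Γ.Adj x b') := by
    rintro b hb b' hb' hne x ⟨hxb, hxb'⟩
    have hxB : x ∈ B := hB'memR hxb hb
    have hb'B : b' ∈ Bᶜ := horbB' hb hb'
    have hd2 : Γ.dist b b' = 2 :=
      dist_two_of hconn (Ne.symm hne) (hnoB'B' hb hb'B) hxb.symm hxb'
    have hΓ2 : ∀ c, Γ.dist b c = 2 → c ∈ POrbit N b := by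
      intro c hcd
      obtain ⟨g, hg, hgb, hgb'⟩ := hldt.2 b b' c 2 (by omega) (by omega) hd2 hcd
      have := hmov g hg hb'
      rwa [hgb, hgb'] at this
    have hthru : ∀ d ∈ Bᶜ, ∀ y, Γ.Adj y b → Γ.Adj y d → d ∈ POrbit N b := by
      intro d hd y hyb hyd
      by_cases hdb : d = b
      · rw [hdb]; exact horbself b
      · exact hΓ2 d (dist_two_of hconn (fun h => hdb h.symm) (hnoB'B' hb hd) hyb.symm hyd)
    obtain ⟨d₀, hd₀, hd₀orb⟩ := hother b hb
    obtain ⟨e, hxe, heorb⟩ := hmeetB' x hxB d₀ hd₀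
    have heB' : e ∈ Bᶜ := hBmem hxe hxB
    have h1 : e ∈ POrbit N b := hthru e heB' x hxb hxe
    exact hd₀orb (horbtrans h1 (horbsymm heorb))
  -- uniqueness of the block through a point in a given class
  have huniq : ∀ x ∈ B, ∀ b b' : V, Γ.Adj x b → Γ.Adj x b' → b' ∈ POrbit N b → b = b' := by
    intro x hx b b' hxb hxb' horb
    by_contra hne
    exact hdisj b (hBmem hxb hx) b' horb (fun h => hne h.symm) x ⟨hxb, hxb'⟩
  -- every class has at least two blocks
  have hclass2 : ∀ b ∈ Bᶜ, ∃ b', b' ∈ POrbit N b ∧ b' ≠ b := by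
    intro b hb
    by_contra h
    push_neg at h
    have hsing : ∀ c ∈ Bᶜ, ∀ c', c' ∈ POrbit N c → c' = c := by
      intro c hc c' hc'
      obtain ⟨g, hg, hgb⟩ := hGtransB' b hb c hc
      have h1 : g⁻¹ c' ∈ POrbit N (g⁻¹ c) := hmov g⁻¹ (G.inv_mem hg) hc'
      rw [← hgb, g.inv_apply_self] at h1
      have h2 := h (g⁻¹ c') h1
      have : c' = g b := by
        rw [← h2, g.apply_inv_self]
      rw [this, hgb]
    have hcomp : ∀ c ∈ Bᶜ, ∀ x ∈ B, Γ.Adj x c := by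
      intro c hc x hx
      obtain ⟨e, hxe, heorb⟩ := hmeetB' x hx c hc
      rwa [hsing c hc e heorb] at hxe
    have hd2 : Γ.dist u₀ v₀ ≤ 2 := by
      obtain ⟨b₀, hb₀⟩ := hB'ne
      obtain ⟨x₀', hx₀'⟩ := hBne
      by_cases huv : u₀ = v₀
      · simp [huv, SimpleGraph.dist_self]
      have key : Γ.Adj u₀ v₀ ∨ ∃ z, Γ.Adj u₀ z ∧ Γ.Adj z v₀ := by
        by_cases hu : u₀ ∈ B
        · by_cases hv : v₀ ∈ B
          · exact Or.inr ⟨b₀, hcomp b₀ hb₀ u₀ hu, (hcomp b₀ hb₀ v₀ hv).symm⟩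
          · exact Or.inl (hcomp v₀ hv u₀ hu)
        · by_cases hv : v₀ ∈ B
          · exact Or.inl ((hcomp u₀ hu v₀ hv).symm)
          · exact Or.inr ⟨x₀', (hcomp u₀ hu x₀' hx₀').symm, hcomp v₀ hv x₀' hx₀'⟩
      rcases key with h1 | ⟨z, h1, h2⟩
      · have := SimpleGraph.dist_eq_one_iff_adj.mpr h1
        omega
      · have := SimpleGraph.dist_le (SimpleGraph.Walk.cons h1 (SimpleGraph.Walk.cons h2 SimpleGraph.Walk.nil))
        simpa using this
    omega
  -- no block is adjacent to all points
  have hnotall : ∀ b ∈ Bᶜ, ∃ x, x ∈ B ∧ ¬ Γ.Adj x b := by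
    intro b hb
    by_contra h
    push_neg at h
    obtain ⟨b', horbb1, hneb1⟩ := hclass2 b hb
    have hb'B' : b' ∈ Bᶜ := horbB' hb horbb1
    obtain ⟨n, hn, hnb⟩ := horbb1
    have hall' : ∀ w ∈ B, Γ.Adj w b' := by
      intro w hw
      have h1 : n⁻¹ w ∈ B := (hstar.1 n⁻¹ (N.inv_mem hn) w).mpr hw
      have h2 : Γ.Adj (n⁻¹ w) b := h _ h1
      have h3 := (hGaut n (hNG hn) (n⁻¹ w) b).mpr h2
      rwa [n.apply_inv_self, hnb] at h3
    refine htwin b b' (fun hh => hneb1 hh.symm) ?_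
    intro w
    constructor
    · intro hw
      exact (hall' w (hB'mem hw hb)).symm
    · intro hw
      exact (h w (hB'mem hw hb'B')).symm
  -- vertices at distance 4 from a block lie in its class
  have hΓ4sub : ∀ b ∈ Bᶜ, ∀ c, Γ.dist b c = 4 → c ∈ POrbit N b := by
    intro b hb
    obtain ⟨x₁, hx₁B, hx₁n⟩ := hnotall b hb
    have hodd : ¬ Even (Γ.dist b x₁) := by
      have := hoddBB' hx₁B hb
      rwa [SimpleGraph.dist_comm] at this
    have hge3 : 3 ≤ Γ.dist b x₁ := by
      have hne1 : Γ.dist b x₁ ≠ 1 := by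
        intro hd
        exact hx₁n (SimpleGraph.dist_eq_one_iff_adj.mp hd).symm
      obtain ⟨m, hm⟩ := Nat.not_even_iff_odd.mp hodd
      omega
    obtain ⟨x, hx3⟩ := exists_dist_three hconn hge3
    have hxB : x ∈ B := by
      by_contra hxB'
      have := hevenB'B' hb (hxB' : x ∈ Bᶜ)
      rw [hx3] at this
      exact (by decide : ¬ Even 3) this
    obtain ⟨c, hxc, hcorb⟩ := hmeetB' x hxB b hb
    have hcb : c ≠ b := by
      intro hh
      rw [hh] at hxc
      have := SimpleGraph.dist_eq_one_iff_adj.mpr hxc.symm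
      omega
    have hcB' : c ∈ Bᶜ := horbB' hb hcorb
    have hd4 : Γ.dist b c = 4 := by
      have hle : Γ.dist b c ≤ 4 := by
        have htr := hconn.dist_triangle (u := b) (v := x) (w := c)
        have h1 : Γ.dist x c = 1 := SimpleGraph.dist_eq_one_iff_adj.mpr hxc
        omega
      have heven := hevenB'B' hb hcB'
      have h0 : Γ.dist b c ≠ 0 := fun hh => hcb (hconn.dist_eq_zero_iff.mp hh).symm
      have h2 : Γ.dist b c ≠ 2 := by
        intro hh
        obtain ⟨w, hw1, hw2⟩ := dist_mid hconn hh
        exact hdisj b hb c hcorb hcb w ⟨hw1.symm, hw2⟩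
      obtain ⟨m, hm⟩ := heven
      omega
    intro c' hc'
    obtain ⟨g, hg, hgb, hgc⟩ := hldt.2 b c c' 4 (by omega) (by omega) hd4 hc'
    have := hmov g hg hcorb
    rwa [hgb, hgc] at this
  -- key: no block meets two disjoint blocks from different classes
  have K1 : ∀ {b c : V}, b ∈ Bᶜ → c ∈ Bᶜ → c ∉ POrbit N b →
      (¬ ∃ x, Γ.Adj x b ∧ Γ.Adj x c) → ∀ e, (∃ x, Γ.Adj x e ∧ Γ.Adj x b) →
      (∃ y, Γ.Adj y e ∧ Γ.Adj y c) → False := by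
    rintro b c hb hc hbc hnm e ⟨x, hxe, hxb⟩ ⟨y, hye, hyc⟩
    have hle : Γ.dist b c ≤ 4 := by
      have := SimpleGraph.dist_le (SimpleGraph.Walk.cons hxb.symm (SimpleGraph.Walk.cons hxe
        (SimpleGraph.Walk.cons hye.symm (SimpleGraph.Walk.cons hyc SimpleGraph.Walk.nil))))
      simpa using this
    have heven := hevenB'B' hb hc
    have h0 : Γ.dist b c ≠ 0 := by
      intro hh
      exact hbc ((hconn.dist_eq_zero_iff.mp hh) ▸ horbself b)
    have h2 : Γ.dist b c ≠ 2 := by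
      intro hh
      obtain ⟨w, hw1, hw2⟩ := dist_mid hconn hh
      exact hnm ⟨w, hw1.symm, hw2⟩
    have h4 : Γ.dist b c = 4 := by
      obtain ⟨m, hm⟩ := heven
      omega
    exact hbc (hΓ4sub b hb c h4)
  -- closure rule: blocks meeting a common block in a third class
  have K2 : ∀ {b e : V}, b ∈ Bᶜ → e ∈ Bᶜ → e ∉ POrbit N b →
      (∃ x, Γ.Adj x b ∧ Γ.Adj x e) → ∀ f ∈ Bᶜ, f ∉ POrbit N b → f ∉ POrbit N e →
      ((∃ x, Γ.Adj x f ∧ Γ.Adj x e) ↔ (∃ x, Γ.Adj x f ∧ Γ.Adj x b)) := by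
    intro b e hb he hbe hme f hf hfb hfe
    constructor
    · intro hmfe
      by_contra hnm
      exact K1 hb hf hfb (fun hh => hnm (msymm hh)) e (msymm hme) (msymm hmfe)
    · intro hmfb
      by_contra hnm
      exact K1 he hf hfe (fun hh => hnm (msymm hh)) b hme (msymm hmfb)
  -- main: blocks in different classes always meet
  have hcrossmeet : ∀ b ∈ Bᶜ, ∀ c ∈ Bᶜ, c ∉ POrbit N b → ∃ x, Γ.Adj x b ∧ Γ.Adj x c := by
    intro b hb c hc hbc
    by_contra hnm
    have hstep : ∀ w' ∈ Bᶜ, ∀ z ∈ Bᶜ,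
        (w' = b ∨ (∃ x, Γ.Adj x w' ∧ Γ.Adj x b) ∨
          (w' ∈ POrbit N b ∧ ∀ f ∈ Bᶜ, f ∉ POrbit N b →
            ((∃ x, Γ.Adj x f ∧ Γ.Adj x w') ↔ (∃ x, Γ.Adj x f ∧ Γ.Adj x b)))) →
        (∃ x, Γ.Adj x z ∧ Γ.Adj x w') →
        (z = b ∨ (∃ x, Γ.Adj x z ∧ Γ.Adj x b) ∨
          (z ∈ POrbit N b ∧ ∀ f ∈ Bᶜ, f ∉ POrbit N b →
            ((∃ x, Γ.Adj x f ∧ Γ.Adj x z) ↔ (∃ x, Γ.Adj x f ∧ Γ.Adj x b)))) := by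
      intro w' hw' z hz hclw hmzw
      rcases hclw with rfl | hmw'b | ⟨horbw, hprops⟩
      · exact Or.inr (Or.inl hmzw)
      · by_cases hzb : z = b
        · exact Or.inl hzb
        by_cases hmzb : ∃ x, Γ.Adj x z ∧ Γ.Adj x b
        · exact Or.inr (Or.inl hmzb)
        have hzorb : z ∈ POrbit N b := by
          by_contra hzn
          exact K1 hb hz hzn (fun hh => hmzb (msymm hh)) w' hmw'b (msymm hmzw)
        have hw'neb : w' ≠ b := by
          rintro rfl
          exact hmzb hmzw
        have hw'orb : w' ∉ POrbit N b := by
          intro hh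
          obtain ⟨x, hx1, hx2⟩ := hmw'b
          exact hdisj b hb w' hh hw'neb x ⟨hx2, hx1⟩
        refine Or.inr (Or.inr ⟨hzorb, ?_⟩)
        intro f hf hforb
        have horbz : POrbit N b = POrbit N z := horbeq hzorb
        have hfz : f ∉ POrbit N z := by rw [← horbz]; exact hforb
        have hzw' : z ∉ POrbit N w' := by
          intro hh
          exact hw'orb (horbtrans hzorb (horbsymm hh))
        by_cases hfw : f ∈ POrbit N w'
        · obtain ⟨d, hd, hdb, hdw⟩ := hthird b hb w' hw'
          obtain ⟨x, hxb⟩ := hnbr b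
          have hxB : x ∈ B := hB'mem hxb hb
          obtain ⟨e, hxe, heorb⟩ := hmeetB' x hxB d hd
          have heB' : e ∈ Bᶜ := hBmem hxe hxB
          have heb : e ∉ POrbit N b := fun hh => hdb (horbtrans hh (horbsymm heorb))
          have hew : e ∉ POrbit N w' := fun hh => hdw (horbtrans hh (horbsymm heorb))
          have hez : e ∉ POrbit N z := by rw [← horbz]; exact heb
          have hmeb : ∃ y, Γ.Adj y e ∧ Γ.Adj y b := ⟨x, hxe, hxb.symm⟩
          have hmew' : ∃ y, Γ.Adj y e ∧ Γ.Adj y w' :=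
            (K2 hb hw' hw'orb (msymm hmw'b) e heB' heb hew).mpr hmeb
          have hmez : ∃ y, Γ.Adj y e ∧ Γ.Adj y z :=
            (K2 hz hw' (fun hh => hzw' (horbsymm hh)) hmzw e heB' hez hew).mp hmew'
          have hfe : f ∉ POrbit N e := fun hh => hew (horbtrans hfw (horbsymm hh))
          have e1 := K2 hb heB' heb (msymm hmeb) f hf hforb hfe
          have e2 := K2 hz heB' hez (msymm hmez) f hf hfz hfe
          exact e2.symm.trans e1
        · have e1 := K2 hb hw' hw'orb (msymm hmw'b) f hf hforb hfw
          have e2 := K2 hz hw' (fun hh => hzw' (horbsymm hh)) hmzw f hf hfz hfw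
          exact e2.symm.trans e1
      · by_cases hzw : z ∈ POrbit N w'
        · have hzeq : z = w' := by
            by_contra hne
            obtain ⟨x, hx1, hx2⟩ := hmzw
            exact hdisj w' hw' z hzw hne x ⟨hx2, hx1⟩
          rw [hzeq]
          exact Or.inr (Or.inr ⟨horbw, hprops⟩)
        · by_cases hzorbb : z ∈ POrbit N b
          · exact absurd ((horbeq horbw) ▸ hzorbb) hzw
          · exact Or.inr (Or.inl ((hprops z hz hzorbb).mp hmzw))
    have hmain : ∀ k, ∀ z ∈ Bᶜ, Γ.dist b z = k →
        (z = b ∨ (∃ x, Γ.Adj x z ∧ Γ.Adj x b) ∨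
          (z ∈ POrbit N b ∧ ∀ f ∈ Bᶜ, f ∉ POrbit N b →
            ((∃ x, Γ.Adj x f ∧ Γ.Adj x z) ↔ (∃ x, Γ.Adj x f ∧ Γ.Adj x b)))) := by
      intro k
      induction k using Nat.strong_induction_on with
      | _ k ih =>
        intro z hz hdz
        rcases Nat.eq_zero_or_pos k with hk0 | hkpos
        · left
          rw [hk0] at hdz
          exact (hconn.dist_eq_zero_iff.mp hdz).symm
        · have heven : Even k := hdz ▸ hevenB'B' hb hz
          have hk2 : 2 ≤ k := by
            obtain ⟨m, hm⟩ := heven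
            omega
          obtain ⟨w, hwz, hwd⟩ := dist_pred hconn (k := k - 1) (by omega : Γ.dist b z = (k-1) + 1)
          obtain ⟨w2, hw2w, hw2d⟩ := dist_pred hconn (k := k - 2) (by omega : Γ.dist b w = (k-2) + 1)
          have hw2B' : w2 ∈ Bᶜ := by
            intro hw2B
            have := hoddBB' hw2B hb
            rw [SimpleGraph.dist_comm, hw2d] at this
            have heven2 : Even (k - 2) := by
              obtain ⟨m, hm⟩ := heven
              exact ⟨m - 1, by omega⟩
            exact this heven2
          have hcl2 := ih (k - 2) (by omega) w2 hw2B' hw2d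
          exact hstep w2 hw2B' z hz hcl2 ⟨w, hwz, hw2w.symm⟩
    rcases hmain (Γ.dist b c) c hc rfl with rfl | hm | ⟨horb, _⟩
    · exact hbc (horbself c)
    · exact hnm (msymm hm)
    · exact hbc horb
  -- distance structure
  have hd2cross : ∀ b ∈ Bᶜ, ∀ c ∈ Bᶜ, c ∉ POrbit N b → Γ.dist b c = 2 := by
    intro b hb c hc hbc
    obtain ⟨x, hxb, hxc⟩ := hcrossmeet b hb c hc hbc
    exact dist_two_of hconn (fun hh => hbc (hh ▸ horbself b)) (hnoB'B' hb hc) hxb.symm hxc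
  have hd4class : ∀ b ∈ Bᶜ, ∀ c, c ∈ POrbit N b → c ≠ b → Γ.dist b c = 4 := by
    intro b hb c hcorb hcb
    have hcB' : c ∈ Bᶜ := horbB' hb hcorb
    have hle : Γ.dist b c ≤ 4 := by
      obtain ⟨x, hbx⟩ := hnbr b
      have hxB : x ∈ B := hB'mem hbx hb
      obtain ⟨d, hd, hdorb⟩ := hother b hb
      obtain ⟨e, hxe, heorb⟩ := hmeetB' x hxB d hd
      have heB' : e ∈ Bᶜ := hBmem hxe hxB
      have heb : e ∉ POrbit N b := fun hh => hdorb (horbtrans hh (horbsymm heorb))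
      have hce : c ∉ POrbit N e := by
        intro hh
        exact heb (horbtrans hcorb (horbsymm hh))
      obtain ⟨w, hwe, hwc⟩ := hcrossmeet e heB' c hcB' hce
      have := SimpleGraph.dist_le (SimpleGraph.Walk.cons hbx (SimpleGraph.Walk.cons hxe
        (SimpleGraph.Walk.cons hwe.symm (SimpleGraph.Walk.cons hwc SimpleGraph.Walk.nil))))
      simpa using this
    have heven := hevenB'B' hb hcB'
    have h0 : Γ.dist b c ≠ 0 := fun hh => hcb (hconn.dist_eq_zero_iff.mp hh).symm
    have h2 : Γ.dist b c ≠ 2 := by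
      intro hh
      obtain ⟨w, hw1, hw2⟩ := dist_mid hconn hh
      exact hdisj b hb c hcorb hcb w ⟨hw1.symm, hw2⟩
    obtain ⟨m, hm⟩ := heven
    omega
  have hdB : ∀ x ∈ B, ∀ y ∈ B, Γ.dist x y = 0 ∨ Γ.dist x y = 2 ∨ Γ.dist x y = 4 := by
    intro x hx y hy
    have hle : Γ.dist x y ≤ 4 := by
      by_cases hxy : x = y
      · simp [hxy, SimpleGraph.dist_self]
      obtain ⟨b, hxb⟩ := hnbr x
      have hbB' : b ∈ Bᶜ := hBmem hxb hx
      obtain ⟨d, hd, hdorb⟩ := hother b hbB'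
      obtain ⟨c, hyc, hcorb⟩ := hmeetB' y hy d hd
      have hcB' : c ∈ Bᶜ := hBmem hyc hy
      have hcb : c ∉ POrbit N b := fun hh => hdorb (horbtrans hh (horbsymm hcorb))
      obtain ⟨w, hwb, hwc⟩ := hcrossmeet b hbB' c hcB' hcb
      have := SimpleGraph.dist_le (SimpleGraph.Walk.cons hxb (SimpleGraph.Walk.cons hwb.symm
        (SimpleGraph.Walk.cons hwc (SimpleGraph.Walk.cons hyc.symm SimpleGraph.Walk.nil))))
      simpa using this
    obtain ⟨m, hm⟩ := hevenBB hx hy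
    omega
  -- sphere = orbit, for blocks
  have horbit_stab : ∀ v c : V, ∀ i, 1 ≤ i → i ≤ 4 → Γ.dist v c = i →
      {d | ∃ g ∈ G, g v = v ∧ g c = d} = {d | Γ.dist v d = i} := by
    intro v c i h1 h4 hd
    ext d
    constructor
    · rintro ⟨g, hg, hgv, hgc⟩
      have := aut_dist hconn (hGaut g hg) v c
      rw [hgv, hgc] at this
      simp only [Set.mem_setOf_eq]
      rw [this, hd]
    · intro hdd
      exact hldt.2 v c d i h1 h4 hd hdd
  have horbit_self : ∀ v : V, {d | ∃ g ∈ G, g v = v ∧ g v = d} = {v} := by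
    intro v
    ext d
    simp only [Set.mem_setOf_eq, Set.mem_singleton_iff]
    constructor
    · rintro ⟨g, hg, hgv, hgd⟩
      rw [← hgd, hgv]
    · rintro rfl
      exact ⟨1, G.one_mem, rfl, rfl⟩
  -- nonemptiness of distance-2 point sphere
  have hs2ne : ∀ x ∈ B, ∃ y, Γ.dist x y = 2 ∧ y ∈ B := by
    intro x hx
    by_contra h
    push_neg at h
    obtain ⟨b, hxb⟩ := hnbr x
    have hbB' : b ∈ Bᶜ := hBmem hxb hx
    obtain ⟨d, hd, hdorb⟩ := hother b hbB'
    obtain ⟨e, hxe, heorb⟩ := hmeetB' x hx d hd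
    have heB' : e ∈ Bᶜ := hBmem hxe hx
    have hbe : b ≠ e := by
      intro hh
      apply hdorb
      rw [hh]
      exact horbsymm heorb
    have honly : ∀ c ∈ Bᶜ, Γ.Adj x c → ∀ w, Γ.Adj c w → w = x := by
      intro c hc hxc w hcw
      have hwB : w ∈ B := hB'mem hcw hc
      by_contra hwx
      have hdxw : Γ.dist x w = 2 :=
        dist_two_of hconn (fun hh => hwx hh.symm) (hnoBB hx hwB) hxc hcw
      exact h w hdxw hwB
    refine htwin b e hbe ?_
    intro w
    constructor
    · intro hbw
      have := honly b hbB' hxb w hbw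
      rw [this]
      exact hxe.symm
    · intro hew
      have := honly e heB' hxe w hew
      rw [this]
      exact hxb.symm
  -- conclusion 5 : rank of G on B is 2 or 3
  have hconc5 : ∀ x ∈ B,
      {S : Set V | ∃ y ∈ B, S = {z | ∃ g ∈ G, g x = x ∧ g y = z}}.ncard ∈ ({2, 3} : Set ℕ) := by
    intro x hx
    obtain ⟨y₂, hy₂d, hy₂B⟩ := hs2ne x hx
    have hxy₂ : x ∉ ({z | Γ.dist x z = 2} : Set V) := by
      simp [SimpleGraph.dist_self]
    by_cases h4 : ∃ y ∈ B, Γ.dist x y = 4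
    · -- rank 3
      have hset : {S : Set V | ∃ y ∈ B, S = {z | ∃ g ∈ G, g x = x ∧ g y = z}} =
          {{x}, {z | Γ.dist x z = 2}, {z | Γ.dist x z = 4}} := by
        obtain ⟨y₄, hy₄B, hy₄d⟩ := h4
        ext S
        simp only [Set.mem_setOf_eq, Set.mem_insert_iff, Set.mem_singleton_iff]
        constructor
        · rintro ⟨y, hy, rfl⟩
          rcases hdB x hx y hy with h0 | h2 | hh4
          · left
            have : y = x := (hconn.dist_eq_zero_iff.mp h0).symm
            rw [this]
            exact horbit_self x
          · right; left
            exact horbit_stab x y 2 (by omega) (by omega) h2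
          · right; right
            exact horbit_stab x y 4 (by omega) (by omega) hh4
        · rintro (rfl | rfl | rfl)
          · exact ⟨x, hx, (horbit_self x).symm⟩
          · exact ⟨y₂, hy₂B, (horbit_stab x y₂ 2 (by omega) (by omega) hy₂d).symm⟩
          · exact ⟨y₄, hy₄B, (horbit_stab x y₄ 4 (by omega) (by omega) hy₄d).symm⟩
      rw [hset]
      have hne1 : ({x} : Set V) ≠ {z | Γ.dist x z = 2} := by
        intro hh
        exact hxy₂ (hh ▸ (Set.mem_singleton x))
      have hne2 : ({x} : Set V) ≠ {z | Γ.dist x z = 4} := by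
        intro hh
        have : x ∈ ({z | Γ.dist x z = 4} : Set V) := hh ▸ (Set.mem_singleton x)
        simp [SimpleGraph.dist_self] at this
      have hne3 : ({z | Γ.dist x z = 2} : Set V) ≠ {z | Γ.dist x z = 4} := by
        intro hh
        have h1 : y₂ ∈ ({z | Γ.dist x z = 2} : Set V) := hy₂d
        rw [hh] at h1
        simp only [Set.mem_setOf_eq] at h1
        omega
      have hcard : ({{x}, {z | Γ.dist x z = 2}, {z | Γ.dist x z = 4}} : Set (Set V)).ncard = 3 := by
        rw [Set.ncard_insert_of_notMem (by simp [hne1, hne2]) (Set.toFinite _),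
          Set.ncard_pair hne3]
      rw [hcard]
      right
      rfl
    · -- rank 2
      push_neg at h4
      have hset : {S : Set V | ∃ y ∈ B, S = {z | ∃ g ∈ G, g x = x ∧ g y = z}} =
          {{x}, {z | Γ.dist x z = 2}} := by
        ext S
        simp only [Set.mem_setOf_eq, Set.mem_insert_iff, Set.mem_singleton_iff]
        constructor
        · rintro ⟨y, hy, rfl⟩
          rcases hdB x hx y hy with h0 | h2 | hh4
          · left
            have : y = x := (hconn.dist_eq_zero_iff.mp h0).symm
            rw [this]
            exact horbit_self x
          · right
            exact horbit_stab x y 2 (by omega) (by omega) h2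
          · exact absurd hh4 (h4 y hy)
        · rintro (rfl | rfl)
          · exact ⟨x, hx, (horbit_self x).symm⟩
          · exact ⟨y₂, hy₂B, (horbit_stab x y₂ 2 (by omega) (by omega) hy₂d).symm⟩
      rw [hset]
      have hne1 : ({x} : Set V) ≠ {z | Γ.dist x z = 2} := by
        intro hh
        exact hxy₂ (hh ▸ (Set.mem_singleton x))
      rw [Set.ncard_pair hne1]
      left
      rfl
  -- conclusion 7 : rank of G on B' is 3
  have hconc7 : ∀ b ∈ Bᶜ,
      {S : Set V | ∃ c ∈ Bᶜ, S = {d | ∃ g ∈ G, g b = b ∧ g c = d}}.ncard = 3 := by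
    intro b hb
    obtain ⟨d₂, hd₂B, hd₂orb⟩ := hother b hb
    have hd₂d : Γ.dist b d₂ = 2 := hd2cross b hb d₂ hd₂B hd₂orb
    obtain ⟨d₄, hd₄orb, hd₄ne⟩ := hclass2 b hb
    have hd₄B : d₄ ∈ Bᶜ := horbB' hb hd₄orb
    have hd₄d : Γ.dist b d₄ = 4 := hd4class b hb d₄ hd₄orb hd₄ne
    have hset : {S : Set V | ∃ c ∈ Bᶜ, S = {d | ∃ g ∈ G, g b = b ∧ g c = d}} =
        {{b}, {d | Γ.dist b d = 2}, {d | Γ.dist b d = 4}} := by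
      ext S
      simp only [Set.mem_setOf_eq, Set.mem_insert_iff, Set.mem_singleton_iff]
      constructor
      · rintro ⟨c, hc, rfl⟩
        by_cases hcb : c = b
        · left
          rw [hcb]
          exact horbit_self b
        by_cases hcorb : c ∈ POrbit N b
        · right; right
          exact horbit_stab b c 4 (by omega) (by omega) (hd4class b hb c hcorb hcb)
        · right; left
          exact horbit_stab b c 2 (by omega) (by omega) (hd2cross b hb c hc hcorb)
      · rintro (rfl | rfl | rfl)
        · exact ⟨b, hb, (horbit_self b).symm⟩
        · exact ⟨d₂, hd₂B, (horbit_stab b d₂ 2 (by omega) (by omega) hd₂d).symm⟩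
        · exact ⟨d₄, hd₄B, (horbit_stab b d₄ 4 (by omega) (by omega) hd₄d).symm⟩
    rw [hset]
    have hne1 : ({b} : Set V) ≠ {d | Γ.dist b d = 2} := by
      intro hh
      have : b ∈ ({d | Γ.dist b d = 2} : Set V) := hh ▸ (Set.mem_singleton b)
      simp [SimpleGraph.dist_self] at this
    have hne2 : ({b} : Set V) ≠ {d | Γ.dist b d = 4} := by
      intro hh
      have : b ∈ ({d | Γ.dist b d = 4} : Set V) := hh ▸ (Set.mem_singleton b)
      simp [SimpleGraph.dist_self] at this
    have hne3 : ({d | Γ.dist b d = 2} : Set V) ≠ {d | Γ.dist b d = 4} := by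
      intro hh
      have h1 : d₂ ∈ ({d | Γ.dist b d = 2} : Set V) := hd₂d
      rw [hh] at h1
      simp only [Set.mem_setOf_eq] at h1
      omega
    rw [Set.ncard_insert_of_notMem (by simp [hne1, hne2]) (Set.toFinite _),
      Set.ncard_pair hne3]
  -- conclusion 8 : imprimitivity
  have hconc8 : ∃ 𝓟 : Set (Set V), (∀ C ∈ 𝓟, C ⊆ Bᶜ ∧ 2 ≤ C.ncard) ∧ 2 ≤ 𝓟.ncard ∧
      (∀ b ∈ Bᶜ, ∃! C, C ∈ 𝓟 ∧ b ∈ C) ∧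
      (∀ g ∈ G, ∀ C ∈ 𝓟, (fun z => g z) '' C ∈ 𝓟) := by
    refine ⟨{S : Set V | ∃ x ∈ Bᶜ, S = POrbit N x}, ?_, ?_, ?_, ?_⟩
    · rintro C ⟨c, hc, rfl⟩
      refine ⟨horbB' hc, ?_⟩
      obtain ⟨c', hc'orb, hc'ne⟩ := hclass2 c hc
      have : ({c, c'} : Set V) ⊆ POrbit N c := by
        intro w hw
        simp only [Set.mem_insert_iff, Set.mem_singleton_iff] at hw
        rcases hw with h | h
        · rw [h]; exact horbself c
        · rw [h]; exact hc'orb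
      calc 2 = ({c, c'} : Set V).ncard := (Set.ncard_pair (fun hh => hc'ne hh.symm)).symm
        _ ≤ (POrbit N c).ncard := Set.ncard_le_ncard this (Set.toFinite _)
    · rw [hstar.2.2]
      omega
    · intro b hb
      refine ⟨POrbit N b, ⟨⟨b, hb, rfl⟩, horbself b⟩, ?_⟩
      rintro S ⟨⟨c, hc, rfl⟩, hbS⟩
      exact horbeq hbS
    · rintro g hg C ⟨c, hc, rfl⟩
      refine ⟨g c, fun hh => hc ((hGB g hg c).mp hh), ?_⟩
      ext w
      simp only [Set.mem_image]
      constructor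
      · rintro ⟨v, hv, rfl⟩
        exact hmov g hg hv
      · intro hw
        refine ⟨g⁻¹ w, ?_, g.apply_inv_self w⟩
        have := hmov g⁻¹ (G.inv_mem hg) hw
        rwa [g.inv_apply_self] at this
  -- conclusion 9 : degree r and 2-transitivity on neighbourhoods
  have hdeg : ∀ x ∈ B, (Γ.neighborSet x).ncard = r := by
    intro x hx
    have hinj : Set.InjOn (fun b => POrbit N b) (Γ.neighborSet x) := by
      intro b1 h1 b2 h2 heq
      have heq' : POrbit N b1 = POrbit N b2 := heq
      refine huniq x hx b1 b2 h1 h2 ?_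
      rw [heq']
      exact horbself b2
    have himg : (fun b => POrbit N b) '' (Γ.neighborSet x) =
        {S : Set V | ∃ c ∈ Bᶜ, S = POrbit N c} := by
      ext S
      constructor
      · rintro ⟨e, he, rfl⟩
        exact ⟨e, hBmem he hx, rfl⟩
      · rintro ⟨c, hc, rfl⟩
        obtain ⟨e, hxe, heorb⟩ := hmeetB' x hx c hc
        exact ⟨e, hxe, (horbeq heorb).symm⟩
    calc (Γ.neighborSet x).ncard
        = ((fun b => POrbit N b) '' (Γ.neighborSet x)).ncard :=
          (Set.ncard_image_of_injOn hinj).symm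
      _ = r := by rw [himg]; exact hstar.2.2
  have hclaimA : ∀ x ∈ B, ∀ y z z' : V, Γ.Adj x y → Γ.Adj x z → Γ.Adj x z' →
      z ≠ y → z' ≠ y → ∃ h ∈ G, h x = x ∧ h y = y ∧ h z = z' := by
    intro x hx y z z' hxy hxz hxz' hzy hz'y
    have hyB' := hBmem hxy hx
    have hzB' := hBmem hxz hx
    have hz'B' := hBmem hxz' hx
    have hzy' : z ∉ POrbit N y := fun hh => hzy (huniq x hx y z hxy hxz hh).symm
    have hz'y' : z' ∉ POrbit N y := fun hh => hz'y (huniq x hx y z' hxy hxz' hh).symm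
    have hdyz : Γ.dist y z = 2 := hd2cross y hyB' z hzB' hzy'
    have hdyz' : Γ.dist y z' = 2 := hd2cross y hyB' z' hz'B' hz'y'
    obtain ⟨g, hg, hgy, hgz⟩ := hldt.2 y z z' 2 (by omega) (by omega) hdyz hdyz'
    have hgxB : g x ∈ B := (hGB g hg x).mpr hx
    obtain ⟨n, hn, hnx⟩ := hstar.2.1 (g x) hgxB x hx
    refine ⟨n * g, G.mul_mem (hNG hn) hg, ?_, ?_, ?_⟩
    · rw [Equiv.Perm.mul_apply, hnx]
    · rw [Equiv.Perm.mul_apply, hgy]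
      have hadj1 : Γ.Adj (g x) y := by
        have := (hGaut g hg x y).mpr hxy
        rwa [hgy] at this
      have hadj2 : Γ.Adj x (n y) := by
        have := (hGaut n (hNG hn) (g x) y).mpr hadj1
        rwa [hnx] at this
      exact (huniq x hx y (n y) hxy hadj2 ⟨n, hn, rfl⟩).symm
    · rw [Equiv.Perm.mul_apply, hgz]
      have hadj1 : Γ.Adj (g x) z' := by
        have := (hGaut g hg x z).mpr hxz
        rwa [hgz] at this
      have hadj2 : Γ.Adj x (n z') := by
        have := (hGaut n (hNG hn) (g x) z').mpr hadj1
        rwa [hnx] at this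
      exact (huniq x hx z' (n z') hxz' hadj2 ⟨n, hn, rfl⟩).symm
  have hconc9 : ∀ x ∈ B, (Γ.neighborSet x).ncard = r ∧
      ∀ y ∈ Γ.neighborSet x, ∀ z ∈ Γ.neighborSet x,
        ∀ y' ∈ Γ.neighborSet x, ∀ z' ∈ Γ.neighborSet x, y ≠ z → y' ≠ z' →
          ∃ g ∈ G, g x = x ∧ g y = y' ∧ g z = z' := by
    intro x hx
    refine ⟨hdeg x hx, ?_⟩
    intro y hy z hz y' hy' z' hz' hyz hy'z'
    rw [SimpleGraph.mem_neighborSet] at hy hz hy' hz'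
    obtain ⟨g₁, hg₁, hg₁x, hg₁y⟩ := hldt.2 x y y' 1 (by omega) (by omega)
      (SimpleGraph.dist_eq_one_iff_adj.mpr hy) (SimpleGraph.dist_eq_one_iff_adj.mpr hy')
    have hxz₁ : Γ.Adj x (g₁ z) := by
      have := (hGaut g₁ hg₁ x z).mpr hz
      rwa [hg₁x] at this
    have hz₁y' : g₁ z ≠ y' := by
      intro hh
      exact hyz (g₁.injective (hg₁y.trans hh.symm))
    obtain ⟨h, hhG, hhx, hhy', hhz₁⟩ := hclaimA x hx y' (g₁ z) z' hy' hxz₁ hz'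
      hz₁y' (fun hh => hy'z' hh.symm)
    refine ⟨h * g₁, G.mul_mem hhG hg₁, ?_, ?_, ?_⟩
    · rw [Equiv.Perm.mul_apply, hg₁x, hhx]
    · rw [Equiv.Perm.mul_apply, hg₁y, hhy']
    · rw [Equiv.Perm.mul_apply]
      exact hhz₁
  exact ⟨hfaithB, hfaithB', hGB, fun x hx y hy => by
      obtain ⟨n, hn, hnx⟩ := hstar.2.1 x hx y hy
      exact ⟨n, hNG hn, hnx⟩,
    hconc5, hGtransB', hconc7, hconc8, hconc9⟩
end

section
/- Let p be a prime, let V = F_p^d be a d-dimensional vector space over the field with p elements, let N be the group of translations of V, let G_0 ≤ GL(V), and let G = N ⋊ G_0 ≤ AGL(V). Assume: (a) G has rank 2 or 3 in its (transitive) action on V; (b) there exists a G_0-orbit M = {M_1, …, M_r} of linear subspaces of V, with r ≥ 3, such that the induced action of G_0 on M is 2-transitive (not necessarily faithful); (c) V = M_1 + M_2; (d) the stabiliser of M_1 in G_0 is transitive on the set of cosets v + M_1 with v ∉ M_1; (e) the union over i of M_i ∖ {0} is a single G_0-orbit. Define the design D with point set V, block set the set of all cosets v + M_i (1 ≤ i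 ≤ r, v ∈ V), and incidence given by membership. Then G acts as a group of automorphisms of D, D is G-pairwise transitive and N-nicely affine with r parallel classes of blocks, and the incidence graph Γ(D) is r-starlike relative to N and locally (G,4)-distance transitive. -/
open SimpleGraph

section AuxGraph
variable {P L : Type*}

@[simp] lemma auxDInc_adj_inl_inr (I : P → L → Prop) (x : P) (s : L) :
    (DIncGraph I).Adj (Sum.inl x) (Sum.inr s) ↔ I x s := by
  simp [DIncGraph, SimpleGraph.fromRel_adj]

@[simp] lemma auxDInc_adj_inr_inl (I : P → L → Prop) (x : P) (s : L) :
    (DIncGraph I).Adj (Sum.inr s) (Sum.inl x) ↔ I x s := by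
  simp [DIncGraph, SimpleGraph.fromRel_adj]

@[simp] lemma auxDInc_adj_inl_inl (I : P → L → Prop) (x y : P) :
    ¬ (DIncGraph I).Adj (Sum.inl x) (Sum.inl y) := by
  simp [DIncGraph, SimpleGraph.fromRel_adj]

@[simp] lemma auxDInc_adj_inr_inr (I : P → L → Prop) (s t : L) :
    ¬ (DIncGraph I).Adj (Sum.inr s) (Sum.inr t) := by
  simp [DIncGraph, SimpleGraph.fromRel_adj]

lemma auxWalk_parity {W : Type*} {Γ : SimpleGraph W} {B : Set W} (hB : IsBipartition Γ B) :
    ∀ {u w : W} (p : Γ.Walk u w), ((u ∈ B) ↔ (w ∈ B)) ↔ Even p.length := by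
  intro u w p
  induction p with
  | nil => simp
  | @cons u v w h q ih =>
    have h2 := hB _ _ h
    simp only [SimpleGraph.Walk.length_cons, Nat.even_add_one, ← ih]
    tauto

lemma auxPOrbit_eq {W : Type*} (N : Subgroup (Equiv.Perm W)) {x y : W}
    (h : y ∈ POrbit N x) : POrbit N x = POrbit N y := by
  obtain ⟨n, hn, rfl⟩ := h
  ext z
  constructor
  · rintro ⟨m, hm, rfl⟩
    exact ⟨m * n⁻¹, N.mul_mem hm (N.inv_mem hn), by simp⟩
  · rintro ⟨m, hm, rfl⟩
    exact ⟨m * n, N.mul_mem hm hn, by simp⟩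

lemma auxPOrbit_self {W : Type*} (N : Subgroup (Equiv.Perm W)) (x : W) :
    x ∈ POrbit N x := ⟨1, N.one_mem, rfl⟩
end AuxGraph


section AuxPerm
variable {V : Type*}

lemma perm_image_mul (σ τ : Equiv.Perm V) (s : Set V) :
    (fun z => (σ * τ) z) '' s = (fun z => σ z) '' ((fun z => τ z) '' s) := by
  rw [← Set.image_comp]; rfl

lemma perm_inv_image (σ : Equiv.Perm V) {s t : Set V} (h : (fun z => σ z) '' s = t) :
    (fun z => σ⁻¹ z) '' t = s := by
  rw [← h, ← Set.image_comp]
  ext x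
  simp [Function.comp, Equiv.Perm.inv_def, Equiv.symm_apply_apply]

end AuxPerm

section AuxGeo
variable {p r : ℕ} {V : Type*} [AddCommGroup V] [Module (ZMod p) V]

/-- The coset `v + Ms i` as a set. -/
def cst (Ms : Fin r → Submodule (ZMod p) V) (i : Fin r) (v : V) : Set V :=
  {x | x - v ∈ Ms i}

lemma mem_cst {Ms : Fin r → Submodule (ZMod p) V} {i : Fin r} {v x : V} :
    x ∈ cst Ms i v ↔ x - v ∈ Ms i := Iff.rfl

lemma self_mem_cst (Ms : Fin r → Submodule (ZMod p) V) (i : Fin r) (v : V) :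
    v ∈ cst Ms i v := by simp [cst]

lemma cst_eq_of {Ms : Fin r → Submodule (ZMod p) V} {i : Fin r} {v w : V}
    (h : w - v ∈ Ms i) : cst Ms i v = cst Ms i w := by
  ext x
  simp only [mem_cst]
  constructor
  · intro hx
    have : x - w = (x - v) - (w - v) := by abel
    rw [this]; exact Submodule.sub_mem _ hx h
  · intro hx
    have : x - v = (x - w) + (w - v) := by abel
    rw [this]; exact Submodule.add_mem _ hx h

lemma cst_eq_self_of_mem {Ms : Fin r → Submodule (ZMod p) V} {i : Fin r} {v x : V}
    (h : x ∈ cst Ms i v) : cst Ms i v = cst Ms i x := cst_eq_of h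

lemma cst_eq_inj {Ms : Fin r → Submodule (ZMod p) V} (hinj : Function.Injective Ms)
    {i j : Fin r} {v w : V} (h : cst Ms i v = cst Ms j w) : i = j ∧ w - v ∈ Ms i := by
  have hwv : w - v ∈ Ms i := by
    have : w ∈ cst Ms i v := h ▸ self_mem_cst Ms j w
    exact this
  have hvw : v - w ∈ Ms j := by
    have : v ∈ cst Ms j w := h ▸ self_mem_cst Ms i v
    exact this
  refine ⟨hinj ?_, hwv⟩
  apply SetLike.ext'
  ext m
  constructor
  · intro hm
    have hm' : m ∈ Ms i := hm
    have h1 : m + v ∈ cst Ms i v := by simp [mem_cst, hm']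
    rw [h] at h1
    have : m + v - w = m + (v - w) := by abel
    rw [mem_cst, this] at h1
    have := Submodule.sub_mem _ h1 hvw
    simpa using this
  · intro hm
    have hm' : m ∈ Ms j := hm
    have h1 : m + w ∈ cst Ms j w := by simp [mem_cst, hm']
    rw [← h] at h1
    have : m + w - v = m + (w - v) := by abel
    rw [mem_cst, this] at h1
    have := Submodule.sub_mem _ h1 hwv
    simpa using this

/-- The affine permutation `x ↦ g x + t`. -/
def aff (g : V ≃ₗ[ZMod p] V) (t : V) : Equiv.Perm V :=
  g.toEquiv.trans (Equiv.addRight t)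

@[simp] lemma aff_apply (g : V ≃ₗ[ZMod p] V) (t x : V) : aff g t x = g x + t := rfl

lemma map_mem_iff {Ms : Fin r → Submodule (ZMod p) V} {g : V ≃ₗ[ZMod p] V} {i j : Fin r}
    (hg : (Ms i).map (g : V →ₗ[ZMod p] V) = Ms j) (x : V) : g x ∈ Ms j ↔ x ∈ Ms i := by
  rw [← hg]
  constructor
  · rintro ⟨m, hm, hme⟩
    simp only [LinearEquiv.coe_coe] at hme
    rwa [← g.injective hme]
  · intro hx
    exact ⟨x, hx, rfl⟩

lemma aff_image_cst {Ms : Fin r → Submodule (ZMod p) V} {g : V ≃ₗ[ZMod p] V} {i j : Fin r}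
    (hg : (Ms i).map (g : V →ₗ[ZMod p] V) = Ms j) (t v : V) :
    (fun z => aff g t z) '' cst Ms i v = cst Ms j (g v + t) := by
  ext x
  simp only [Set.mem_image, mem_cst, aff_apply]
  constructor
  · rintro ⟨y, hy, rfl⟩
    have h1 : g y + t - (g v + t) = g (y - v) := by rw [map_sub]; abel
    rw [h1, map_mem_iff hg]
    exact hy
  · intro hx
    refine ⟨v + g.symm (x - (g v + t)), ?_, ?_⟩
    · have h1 : v + g.symm (x - (g v + t)) - v = g.symm (x - (g v + t)) := by abel
      rw [h1]
      rw [← map_mem_iff hg, g.apply_symm_apply]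
      exact hx
    · rw [map_add, g.apply_symm_apply]
      abel

end AuxGeo

section AuxPT
variable {p r : ℕ} {V : Type*} [AddCommGroup V] [Module (ZMod p) V]
variable {Ms : Fin r → Submodule (ZMod p) V}
variable {G₀ : Subgroup (V ≃ₗ[ZMod p] V)} {G : Subgroup (Equiv.Perm V)}

lemma aff_mem_G (hG : ∀ σ : Equiv.Perm V, σ ∈ G ↔ ∃ g ∈ G₀, ∃ t : V, ∀ x : V, σ x = g x + t)
    {g : V ≃ₗ[ZMod p] V} (hg : g ∈ G₀) (t : V) : aff g t ∈ G :=
  (hG _).2 ⟨g, hg, t, fun _ => rfl⟩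

/-- PT1: transitivity on flags. -/
lemma ptPT1 (hG : ∀ σ : Equiv.Perm V, σ ∈ G ↔ ∃ g ∈ G₀, ∃ t : V, ∀ x : V, σ x = g x + t)
    (hb2 : ∀ i j : Fin r, ∃ g ∈ G₀, (Ms i).map (g : V →ₗ[ZMod p] V) = Ms j) :
    ∀ (x : V) (i : Fin r) (v : V) (x' : V) (i' : Fin r) (v' : V),
      x ∈ cst Ms i v → x' ∈ cst Ms i' v' →
      ∃ σ ∈ G, σ x = x' ∧ (fun z => σ z) '' cst Ms i v = cst Ms i' v' := by
  intro x i v x' i' v' hx hx'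
  obtain ⟨g, hg, hmap⟩ := hb2 i i'
  refine ⟨aff g (x' - g x), aff_mem_G hG hg _, by simp, ?_⟩
  rw [cst_eq_self_of_mem hx, aff_image_cst hmap, cst_eq_self_of_mem hx',
    show g x + (x' - g x) = x' by abel]

/-- PT2: transitivity on antiflags. -/
lemma ptPT2 (hG : ∀ σ : Equiv.Perm V, σ ∈ G ↔ ∃ g ∈ G₀, ∃ t : V, ∀ x : V, σ x = g x + t)
    (i0 : Fin r)
    (hb2 : ∀ i j : Fin r, ∃ g ∈ G₀, (Ms i).map (g : V →ₗ[ZMod p] V) = Ms j)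
    (hd : ∀ v w : V, v ∉ Ms i0 → w ∉ Ms i0 →
      ∃ g ∈ G₀, (Ms i0).map (g : V →ₗ[ZMod p] V) = Ms i0 ∧ g v - w ∈ Ms i0) :
    ∀ (x : V) (i : Fin r) (v : V) (x' : V) (i' : Fin r) (v' : V),
      x ∉ cst Ms i v → x' ∉ cst Ms i' v' →
      ∃ σ ∈ G, σ x = x' ∧ (fun z => σ z) '' cst Ms i v = cst Ms i' v' := by
  intro x i v x' i' v' hx hx'
  obtain ⟨g₁, hg₁, hmap₁⟩ := hb2 i i0
  obtain ⟨g₂, hg₂, hmap₂⟩ := hb2 i' i0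
  set σ₁ := aff g₁ (-(g₁ x)) with hσ₁def
  set σ₂ := aff g₂ (-(g₂ x')) with hσ₂def
  have himg₁ : (fun z => σ₁ z) '' cst Ms i v = cst Ms i0 (g₁ v + -(g₁ x)) :=
    aff_image_cst hmap₁ _ _
  have himg₂ : (fun z => σ₂ z) '' cst Ms i' v' = cst Ms i0 (g₂ v' + -(g₂ x')) :=
    aff_image_cst hmap₂ _ _
  set u := g₁ v + -(g₁ x) with hu
  set u' := g₂ v' + -(g₂ x') with hu'
  have hσ₁x : σ₁ x = 0 := by simp [hσ₁def]
  have hσ₂x : σ₂ x' = 0 := by simp [hσ₂def]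
  have h0u : (0 : V) ∉ cst Ms i0 u := by
    intro h0
    rw [← hσ₁x, ← himg₁] at h0
    obtain ⟨y, hy, hyx⟩ := h0
    have : y = x := σ₁.injective hyx
    exact hx (this ▸ hy)
  have h0u' : (0 : V) ∉ cst Ms i0 u' := by
    intro h0
    rw [← hσ₂x, ← himg₂] at h0
    obtain ⟨y, hy, hyx⟩ := h0
    have : y = x' := σ₂.injective hyx
    exact hx' (this ▸ hy)
  have hu0 : u ∉ Ms i0 := by
    intro h; exact h0u (by simpa [mem_cst] using Submodule.neg_mem _ h)
  have hu0' : u' ∉ Ms i0 := by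
    intro h; exact h0u' (by simpa [mem_cst] using Submodule.neg_mem _ h)
  obtain ⟨g, hg, hgmap, hguu⟩ := hd u u' hu0 hu0'
  set σ₃ := aff g 0 with hσ₃def
  have hσ₃0 : σ₃ 0 = 0 := by simp [hσ₃def]
  have himg₃ : (fun z => σ₃ z) '' cst Ms i0 u = cst Ms i0 u' := by
    rw [aff_image_cst hgmap]
    apply cst_eq_of
    have : u' - (g u + 0) = -(g u - u') := by abel
    rw [this]
    exact Submodule.neg_mem _ hguu
  refine ⟨σ₂⁻¹ * (σ₃ * σ₁), G.mul_mem (G.inv_mem (aff_mem_G hG hg₂ _))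
    (G.mul_mem (aff_mem_G hG hg 0) (aff_mem_G hG hg₁ _)), ?_, ?_⟩
  · have : (σ₃ * σ₁) x = 0 := by simp [Equiv.Perm.mul_apply, hσ₁x, hσ₃0]
    rw [Equiv.Perm.mul_apply, this, ← hσ₂x, Equiv.Perm.inv_def, Equiv.symm_apply_apply]
  · rw [perm_image_mul, perm_image_mul, himg₁, himg₃]
    exact perm_inv_image σ₂ himg₂

/-- PT3: transitivity on collinear point pairs. -/
lemma ptPT3 (hG : ∀ σ : Equiv.Perm V, σ ∈ G ↔ ∃ g ∈ G₀, ∃ t : V, ∀ x : V, σ x = g x + t)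
    (he : ∀ x y : V, x ≠ 0 → y ≠ 0 → (∃ i, x ∈ Ms i) → (∃ i, y ∈ Ms i) →
      ∃ g ∈ G₀, g x = y) :
    ∀ x y x' y' : V, x ≠ y → x' ≠ y' →
      (∃ i, y - x ∈ Ms i) → (∃ i, y' - x' ∈ Ms i) →
      ∃ σ ∈ G, σ x = x' ∧ σ y = y' := by
  intro x y x' y' hxy hxy' h1 h2
  obtain ⟨g, hg, hgxy⟩ := he (y - x) (y' - x') (sub_ne_zero_of_ne (Ne.symm hxy))
    (sub_ne_zero_of_ne (Ne.symm hxy')) h1 h2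
  refine ⟨aff g (x' - g x), aff_mem_G hG hg _, by simp, ?_⟩
  have : g y = g (y - x) + g x := by rw [map_sub]; abel
  rw [aff_apply, this, hgxy]
  abel

/-- PT5: transitivity on intersecting block pairs. -/
lemma ptPT5 (hG : ∀ σ : Equiv.Perm V, σ ∈ G ↔ ∃ g ∈ G₀, ∃ t : V, ∀ x : V, σ x = g x + t)
    (hinj : Function.Injective Ms)
    (hb3 : ∀ i j i' j' : Fin r, i ≠ j → i' ≠ j' → ∃ g ∈ G₀,
      (Ms i).map (g : V →ₗ[ZMod p] V) = Ms i' ∧ (Ms j).map (g : V →ₗ[ZMod p] V) = Ms j') :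
    ∀ (i : Fin r) (v : V) (j : Fin r) (w : V) (i' : Fin r) (v' : V) (j' : Fin r) (w' : V),
      cst Ms i v ≠ cst Ms j w → cst Ms i' v' ≠ cst Ms j' w' →
      (cst Ms i v ∩ cst Ms j w).Nonempty → (cst Ms i' v' ∩ cst Ms j' w').Nonempty →
      ∃ σ ∈ G, (fun z => σ z) '' cst Ms i v = cst Ms i' v' ∧
        (fun z => σ z) '' cst Ms j w = cst Ms j' w' := by
  intro i v j w i' v' j' w' hne hne' ⟨z, hz1, hz2⟩ ⟨z', hz1', hz2'⟩
  have hij : i ≠ j := by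
    rintro rfl
    exact hne ((cst_eq_self_of_mem hz1).trans (cst_eq_self_of_mem hz2).symm)
  have hij' : i' ≠ j' := by
    rintro rfl
    exact hne' ((cst_eq_self_of_mem hz1').trans (cst_eq_self_of_mem hz2').symm)
  obtain ⟨g, hg, hm1, hm2⟩ := hb3 i j i' j' hij hij'
  refine ⟨aff g (z' - g z), aff_mem_G hG hg _, ?_, ?_⟩
  · rw [cst_eq_self_of_mem hz1, aff_image_cst hm1, cst_eq_self_of_mem hz1',
      show g z + (z' - g z) = z' by abel]
  · rw [cst_eq_self_of_mem hz2, aff_image_cst hm2, cst_eq_self_of_mem hz2',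
      show g z + (z' - g z) = z' by abel]

lemma cst_meet {i j : Fin r} (hsup : Ms i ⊔ Ms j = ⊤) (v w : V) :
    (cst Ms i v ∩ cst Ms j w).Nonempty := by
  have h : w - v ∈ Ms i ⊔ Ms j := hsup ▸ Submodule.mem_top
  obtain ⟨a, ha, b, hb, hab⟩ := Submodule.mem_sup.mp h
  refine ⟨v + a, ?_, ?_⟩
  · simpa [mem_cst] using ha
  · have h2 : w - v = a + b := hab.symm
    have h3 : v + a - w = a - (w - v) := by abel
    rw [mem_cst, h3, h2, show a - (a + b) = -b by abel]
    exact Submodule.neg_mem _ hb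

lemma sup_all {i1 i2 : Fin r}
    (hb3 : ∀ i j i' j' : Fin r, i ≠ j → i' ≠ j' → ∃ g ∈ G₀,
      (Ms i).map (g : V →ₗ[ZMod p] V) = Ms i' ∧ (Ms j).map (g : V →ₗ[ZMod p] V) = Ms j')
    (hc : Ms i1 ⊔ Ms i2 = ⊤) (h12 : i1 ≠ i2) :
    ∀ i j : Fin r, i ≠ j → Ms i ⊔ Ms j = ⊤ := by
  intro i j hij
  obtain ⟨g, hg, h1, h2⟩ := hb3 i1 i2 i j h12 hij
  rw [← h1, ← h2, ← Submodule.map_sup, hc, Submodule.map_top]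
  exact LinearEquiv.range g

/-- PT6: transitivity on disjoint block pairs. -/
lemma ptPT6 (hG : ∀ σ : Equiv.Perm V, σ ∈ G ↔ ∃ g ∈ G₀, ∃ t : V, ∀ x : V, σ x = g x + t)
    (hinj : Function.Injective Ms) (i0 : Fin r)
    (hb2 : ∀ i j : Fin r, ∃ g ∈ G₀, (Ms i).map (g : V →ₗ[ZMod p] V) = Ms j)
    (hd : ∀ v w : V, v ∉ Ms i0 → w ∉ Ms i0 →
      ∃ g ∈ G₀, (Ms i0).map (g : V →ₗ[ZMod p] V) = Ms i0 ∧ g v - w ∈ Ms i0)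
    (hsup : ∀ i j : Fin r, i ≠ j → Ms i ⊔ Ms j = ⊤) :
    ∀ (i : Fin r) (v : V) (j : Fin r) (w : V) (i' : Fin r) (v' : V) (j' : Fin r) (w' : V),
      cst Ms i v ≠ cst Ms j w → cst Ms i' v' ≠ cst Ms j' w' →
      cst Ms i v ∩ cst Ms j w = ∅ → cst Ms i' v' ∩ cst Ms j' w' = ∅ →
      ∃ σ ∈ G, (fun z => σ z) '' cst Ms i v = cst Ms i' v' ∧
        (fun z => σ z) '' cst Ms j w = cst Ms j' w' := by
  intro i v j w i' v' j' w' hne hne' hdisj hdisj'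
  have hij : j = i := by
    by_contra hij
    exact (Set.nonempty_iff_ne_empty.mp (cst_meet (hsup i j (fun h => hij h.symm)) v w)) hdisj
  subst hij
  have hij' : j' = i' := by
    by_contra hij'
    exact (Set.nonempty_iff_ne_empty.mp
      (cst_meet (hsup i' j' (fun h => hij' h.symm)) v' w')) hdisj'
  subst hij'
  have hwv : w - v ∉ Ms j := fun h => hne (cst_eq_of h)
  have hwv' : w' - v' ∉ Ms j' := fun h => hne' (cst_eq_of h)
  obtain ⟨g₁, hg₁, hmap₁⟩ := hb2 j i0
  obtain ⟨g₂, hg₂, hmap₂⟩ := hb2 j' i0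
  set σ₁ := aff g₁ (-(g₁ v)) with hσ₁def
  set σ₂ := aff g₂ (-(g₂ v')) with hσ₂def
  have himg₁0 : (fun z => σ₁ z) '' cst Ms j v = cst Ms i0 0 := by
    rw [aff_image_cst hmap₁]; congr 1; abel
  have himg₂0 : (fun z => σ₂ z) '' cst Ms j' v' = cst Ms i0 0 := by
    rw [aff_image_cst hmap₂]; congr 1; abel
  have himg₁ : (fun z => σ₁ z) '' cst Ms j w = cst Ms i0 (g₁ (w - v)) := by
    rw [aff_image_cst hmap₁]; congr 1; rw [map_sub]; abel
  have himg₂ : (fun z => σ₂ z) '' cst Ms j' w' = cst Ms i0 (g₂ (w' - v')) := by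
    rw [aff_image_cst hmap₂]; congr 1; rw [map_sub]; abel
  have hu : g₁ (w - v) ∉ Ms i0 := fun h => hwv ((map_mem_iff hmap₁ _).mp h)
  have hu' : g₂ (w' - v') ∉ Ms i0 := fun h => hwv' ((map_mem_iff hmap₂ _).mp h)
  obtain ⟨g, hg, hgmap, hguu⟩ := hd _ _ hu hu'
  set σ₃ := aff g 0 with hσ₃def
  have himg₃0 : (fun z => σ₃ z) '' cst Ms i0 0 = cst Ms i0 0 := by
    rw [aff_image_cst hgmap]
    congr 1; simp
  have himg₃ : (fun z => σ₃ z) '' cst Ms i0 (g₁ (w - v)) = cst Ms i0 (g₂ (w' - v')) := by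
    rw [aff_image_cst hgmap]
    apply cst_eq_of
    have : g₂ (w' - v') - (g (g₁ (w - v)) + 0) = -(g (g₁ (w - v)) - g₂ (w' - v')) := by abel
    rw [this]
    exact Submodule.neg_mem _ hguu
  refine ⟨σ₂⁻¹ * (σ₃ * σ₁), G.mul_mem (G.inv_mem (aff_mem_G hG hg₂ _))
    (G.mul_mem (aff_mem_G hG hg 0) (aff_mem_G hG hg₁ _)), ?_, ?_⟩
  · rw [perm_image_mul, perm_image_mul, himg₁0, himg₃0]
    exact perm_inv_image σ₂ himg₂0
  · rw [perm_image_mul, perm_image_mul, himg₁, himg₃]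
    exact perm_inv_image σ₂ himg₂

end AuxPT

section AuxD
variable {p r : ℕ} {V : Type*} [AddCommGroup V] [Module (ZMod p) V]
variable {Ms : Fin r → Submodule (ZMod p) V}
variable {G₀ : Subgroup (V ≃ₗ[ZMod p] V)} {G : Subgroup (Equiv.Perm V)}

lemma ms_ne_top (hinj : Function.Injective Ms)
    (hb2 : ∀ i j : Fin r, ∃ g ∈ G₀, (Ms i).map (g : V →ₗ[ZMod p] V) = Ms j)
    {i1 i2 : Fin r} (h12 : i1 ≠ i2) : ∀ i, Ms i ≠ ⊤ := by
  intro i hi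
  have hall : ∀ j, Ms j = ⊤ := by
    intro j
    obtain ⟨g, _, hmap⟩ := hb2 i j
    rw [← hmap, hi, Submodule.map_top]
    exact LinearEquiv.range g
  exact h12 (hinj ((hall i1).trans (hall i2).symm))

lemma ms_exists_nonzero (hinj : Function.Injective Ms)
    (hb2 : ∀ i j : Fin r, ∃ g ∈ G₀, (Ms i).map (g : V →ₗ[ZMod p] V) = Ms j)
    {i1 i2 : Fin r} (h12 : i1 ≠ i2) : ∃ m : V, m ≠ 0 ∧ ∃ i, m ∈ Ms i := by
  have hbot : Ms i1 ≠ ⊥ := by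
    intro hb
    have hall : ∀ j, Ms j = ⊥ := by
      intro j
      obtain ⟨g, _, hmap⟩ := hb2 i1 j
      rw [← hmap, hb, Submodule.map_bot]
    exact h12 (hinj ((hall i1).trans (hall i2).symm))
  obtain ⟨m, hm, hm0⟩ := Submodule.exists_mem_ne_zero_of_ne_bot hbot
  exact ⟨m, hm0, i1, hm⟩

lemma transC [Fintype V]
    (hG : ∀ σ : Equiv.Perm V, σ ∈ G ↔ ∃ g ∈ G₀, ∃ t : V, ∀ x : V, σ x = g x + t)
    (ha : {S : Set V | ∃ y : V, S = {z | ∃ σ ∈ G, σ 0 = 0 ∧ σ y = z}}.ncard ∈ ({2, 3} : Set ℕ))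
    (hb1 : ∀ g ∈ G₀, ∀ i : Fin r, ∃ j : Fin r, (Ms i).map (g : V →ₗ[ZMod p] V) = Ms j)
    (hm : ∃ m : V, m ≠ 0 ∧ ∃ i, m ∈ Ms i) :
    ∀ c c' : V, (∀ i, c ∉ Ms i) → (∀ i, c' ∉ Ms i) → ∃ g ∈ G₀, g c = c' := by
  classical
  intro c c' hc hc'
  by_contra hcon
  push_neg at hcon
  have horb : ∀ y : V, {z | ∃ σ ∈ G, σ 0 = 0 ∧ σ y = z} = {z | ∃ g ∈ G₀, g y = z} := by
    intro y
    ext z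
    constructor
    · rintro ⟨σ, hσ, hσ0, rfl⟩
      obtain ⟨g, hg, t, hgt⟩ := (hG σ).1 hσ
      have ht : t = 0 := by
        have h0 := hgt 0
        rw [hσ0, map_zero, zero_add] at h0
        exact h0.symm
      refine ⟨g, hg, ?_⟩
      rw [hgt y, ht, add_zero]
    · rintro ⟨g, hg, rfl⟩
      exact ⟨aff g 0, aff_mem_G hG hg 0, by simp, by simp⟩
  set orb := fun y : V => {z | ∃ g ∈ G₀, g y = z} with horbdef
  obtain ⟨m, hm0, i, hmi⟩ := hm
  have hself : ∀ y : V, y ∈ orb y := fun y => ⟨1, G₀.one_mem, rfl⟩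
  have horb0 : orb 0 = {0} := by
    ext z
    simp only [horbdef, Set.mem_setOf_eq, Set.mem_singleton_iff]
    constructor
    · rintro ⟨g, _, rfl⟩; exact map_zero g
    · rintro rfl; exact ⟨1, G₀.one_mem, map_zero 1⟩
  have horbm : ∀ z ∈ orb m, z ≠ 0 ∧ ∃ j, z ∈ Ms j := by
    rintro z ⟨g, hg, rfl⟩
    refine ⟨fun h => hm0 ?_, ?_⟩
    · have := g.injective (h.trans (map_zero g).symm)
      exact this
    · obtain ⟨j, hj⟩ := hb1 g hg i
      exact ⟨j, (map_mem_iff hj m).mpr hmi⟩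
  have horbc : ∀ d : V, (∀ i, d ∉ Ms i) → ∀ z ∈ orb d, ∀ j, z ∉ Ms j := by
    rintro d hd z ⟨g, hg, rfl⟩ j hzj
    obtain ⟨j', hj'⟩ := hb1 g⁻¹ (G₀.inv_mem hg) j
    have h2 : (g⁻¹ : V ≃ₗ[ZMod p] V) (g d) ∈ Ms j' := (map_mem_iff hj' _).mpr hzj
    rw [show (g⁻¹ : V ≃ₗ[ZMod p] V) (g d) = d from g.symm_apply_apply d] at h2
    exact hd j' h2
  have hcc' : c' ∉ orb c := by rintro ⟨g, hg, h⟩; exact hcon g hg h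
  have hne0 : c ≠ 0 := fun h => hc i (h ▸ (Ms i).zero_mem)
  have hne0' : c' ≠ 0 := fun h => hc' i (h ▸ (Ms i).zero_mem)
  have hd1 : orb 0 ≠ orb m := by
    intro h
    have := hself m
    rw [← h, horb0, Set.mem_singleton_iff] at this
    exact hm0 this
  have hd2 : orb 0 ≠ orb c := by
    intro h
    have := hself c
    rw [← h, horb0, Set.mem_singleton_iff] at this
    exact hne0 this
  have hd3 : orb 0 ≠ orb c' := by
    intro h
    have := hself c'
    rw [← h, horb0, Set.mem_singleton_iff] at this
    exact hne0' this
  have hd4 : orb m ≠ orb c := by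
    intro h
    obtain ⟨j, hj⟩ := (horbm c (h ▸ hself c)).2
    exact hc j hj
  have hd5 : orb m ≠ orb c' := by
    intro h
    obtain ⟨j, hj⟩ := (horbm c' (h ▸ hself c')).2
    exact hc' j hj
  have hd6 : orb c ≠ orb c' := fun h => hcc' (h ▸ hself c')
  have hsub : ({orb 0, orb m, orb c, orb c'} : Set (Set V)) ⊆
      {S : Set V | ∃ y : V, S = {z | ∃ σ ∈ G, σ 0 = 0 ∧ σ y = z}} := by
    intro z hz
    rcases hz with rfl | rfl | rfl | rfl
    · exact ⟨0, (horb 0).symm⟩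
    · exact ⟨m, (horb m).symm⟩
    · exact ⟨c, (horb c).symm⟩
    · exact ⟨c', (horb c').symm⟩
  have hcard : ({orb 0, orb m, orb c, orb c'} : Set (Set V)).ncard = 4 := by
    rw [Set.ncard_insert_of_notMem (by simp [hd1, hd2, hd3]) (Set.toFinite _),
        Set.ncard_insert_of_notMem (by simp [hd4, hd5]) (Set.toFinite _),
        Set.ncard_pair hd6]
  have hle := Set.ncard_le_ncard hsub (Set.toFinite _)
  rw [hcard] at hle
  simp only [Set.mem_insert_iff, Set.mem_singleton_iff] at ha
  rcases ha with h | h <;> omega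

lemma cst_inter_eq {i j : Fin r} {v w z : V} (hz1 : z ∈ cst Ms i v) (hz2 : z ∈ cst Ms j w) :
    cst Ms i v ∩ cst Ms j w = (fun m => z + m) '' ((Ms i : Set V) ∩ (Ms j : Set V)) := by
  rw [cst_eq_self_of_mem hz1, cst_eq_self_of_mem hz2]
  ext x
  simp only [Set.mem_inter_iff, mem_cst, Set.mem_image, SetLike.mem_coe]
  constructor
  · rintro ⟨h1, h2⟩
    exact ⟨x - z, ⟨h1, h2⟩, by abel⟩
  · rintro ⟨m, ⟨h1, h2⟩, rfl⟩
    rw [show z + m - z = m by abel]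
    exact ⟨h1, h2⟩

lemma img_inter {g : V ≃ₗ[ZMod p] V} {i j i' j' : Fin r}
    (h1 : (Ms i).map (g : V →ₗ[ZMod p] V) = Ms i')
    (h2 : (Ms j).map (g : V →ₗ[ZMod p] V) = Ms j') :
    (fun z => g z) '' ((Ms i : Set V) ∩ (Ms j : Set V)) = (Ms i' : Set V) ∩ (Ms j' : Set V) := by
  ext x
  simp only [Set.mem_image, Set.mem_inter_iff, SetLike.mem_coe]
  constructor
  · rintro ⟨y, ⟨hy1, hy2⟩, rfl⟩
    exact ⟨(map_mem_iff h1 y).mpr hy1, (map_mem_iff h2 y).mpr hy2⟩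
  · rintro ⟨hx1, hx2⟩
    refine ⟨g.symm x, ⟨?_, ?_⟩, g.apply_symm_apply x⟩
    · rw [← map_mem_iff h1, g.apply_symm_apply]; exact hx1
    · rw [← map_mem_iff h2, g.apply_symm_apply]; exact hx2

lemma addRight_image_cst (Ms : Fin r → Submodule (ZMod p) V) (i : Fin r) (t v : V) :
    (fun z => (Equiv.addRight t) z) '' cst Ms i v = cst Ms i (v + t) := by
  ext x
  simp only [Set.mem_image, mem_cst, Equiv.coe_addRight]
  constructor
  · rintro ⟨y, hy, rfl⟩
    rw [show y + t - (v + t) = y - v by abel]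
    exact hy
  · intro hx
    exact ⟨x - t, by rw [show x - t - v = x - (v + t) by abel]; exact hx, by abel⟩

lemma image_eq_of_pointwise {σ τ : Equiv.Perm V} (h : ∀ x, σ x = τ x) (s : Set V) :
    (fun z => σ z) '' s = (fun z => τ z) '' s := by
  rw [show (fun z => σ z) = fun z => τ z from funext h]

end AuxD

section AuxLift
variable {V : Type*}

/-- Lift of a permutation group on `V` preserving a block set `𝓑` to the vertex set
of the incidence graph. -/
def liftPerm (𝓑 : Set (Set V)) (G : Subgroup (Equiv.Perm V))
    (hGacts : ∀ σ ∈ G, ∀ s ∈ 𝓑, (fun z => σ z) '' s ∈ 𝓑) :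
    ↥G →* Equiv.Perm (V ⊕ ↥𝓑) where
  toFun g := Equiv.sumCongr (g : Equiv.Perm V)
    { toFun := fun s => ⟨(fun z => (g : Equiv.Perm V) z) '' (s : Set V), hGacts _ g.2 _ s.2⟩
      invFun := fun s => ⟨(fun z => ((g : Equiv.Perm V)⁻¹) z) '' (s : Set V),
        hGacts _ (G.inv_mem g.2) _ s.2⟩
      left_inv := fun s => Subtype.ext (perm_inv_image _ rfl)
      right_inv := fun s => Subtype.ext (by
        have h := perm_inv_image (σ := ((g : Equiv.Perm V))⁻¹) (s := (s : Set V)) rfl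
        rwa [inv_inv] at h) }
  map_one' := by
    apply Equiv.ext
    rintro (x | s)
    · rfl
    · exact congrArg Sum.inr (Subtype.ext (by simp))
  map_mul' g h := by
    apply Equiv.ext
    rintro (x | s)
    · rfl
    · exact congrArg Sum.inr (Subtype.ext (perm_image_mul _ _ _))

lemma liftPerm_inl (𝓑 : Set (Set V)) (G : Subgroup (Equiv.Perm V))
    (hGacts : ∀ σ ∈ G, ∀ s ∈ 𝓑, (fun z => σ z) '' s ∈ 𝓑) (g : ↥G) (x : V) :
    liftPerm 𝓑 G hGacts g (Sum.inl x) = Sum.inl ((g : Equiv.Perm V) x) := rfl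

lemma liftPerm_inr (𝓑 : Set (Set V)) (G : Subgroup (Equiv.Perm V))
    (hGacts : ∀ σ ∈ G, ∀ s ∈ 𝓑, (fun z => σ z) '' s ∈ 𝓑) (g : ↥G) (s : ↥𝓑) :
    liftPerm 𝓑 G hGacts g (Sum.inr s) =
      Sum.inr ⟨(fun z => (g : Equiv.Perm V) z) '' (s : Set V), hGacts _ g.2 _ s.2⟩ := rfl

lemma walk_one {W : Type*} {Γ : SimpleGraph W} {u v : W} (p : Γ.Walk u v)
    (h : p.length = 1) : Γ.Adj u v := by
  have h2 := p.adj_getVert_succ (by omega : 0 < p.length)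
  rw [p.getVert_zero, show (0 + 1) = p.length by omega, p.getVert_length] at h2
  exact h2

lemma walk_two {W : Type*} {Γ : SimpleGraph W} {u v : W} (p : Γ.Walk u v)
    (h : p.length = 2) : ∃ z, Γ.Adj u z ∧ Γ.Adj z v := by
  refine ⟨p.getVert 1, ?_, ?_⟩
  · have h2 := p.adj_getVert_succ (by omega : 0 < p.length)
    rwa [p.getVert_zero] at h2
  · have h2 := p.adj_getVert_succ (by omega : 1 < p.length)
    rwa [show (1 + 1) = p.length by omega, p.getVert_length] at h2

lemma aff_send_pair {p : ℕ} {V : Type*} [AddCommGroup V] [Module (ZMod p) V]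
    {G₀ : Subgroup (V ≃ₗ[ZMod p] V)} {G : Subgroup (Equiv.Perm V)}
    (hG : ∀ σ : Equiv.Perm V, σ ∈ G ↔ ∃ g ∈ G₀, ∃ t : V, ∀ x : V, σ x = g x + t)
    {g : V ≃ₗ[ZMod p] V} (hg : g ∈ G₀) {x y x' y' : V} (hgxy : g (y - x) = y' - x') :
    ∃ σ ∈ G, σ x = x' ∧ σ y = y' := by
  refine ⟨aff g (x' - g x), aff_mem_G hG hg _, by simp, ?_⟩
  have h1 : g y = g (y - x) + g x := by rw [map_sub]; abel
  rw [aff_apply, h1, hgxy]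
  abel

end AuxLift

/-- **Theorem 3** (Theorem `constr->main`): the design and incidence graph of
Construction `constr-regN`.  `V` is a finite vector space over `F_p`, `N` is its group
of translations (as permutations of `V`), `G₀ ≤ GL(V)` and `G = N ⋊ G₀ ≤ AGL(V)`
(realised as a group of permutations of `V`).  Under conditions (a)–(e), the design
`D = (V, cosets of the Mᵢ, ∈)` admits `G` as a group of automorphisms, is `G`-pairwise
transitive and `N`-nicely affine with `r` parallel classes of blocks, and its incidence
graph is `r`-starlike relative to (the lift of) `N` and locally `(G,4)`-distance
transitive. -/
theorem statement2 {p : ℕ} [Fact p.Prime] (V : Type*) [AddCommGroup V]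
    [Module (ZMod p) V] [Fintype V]
    (G₀ : Subgroup (V ≃ₗ[ZMod p] V)) (G N : Subgroup (Equiv.Perm V))
    (hG : ∀ σ : Equiv.Perm V, σ ∈ G ↔ ∃ g ∈ G₀, ∃ t : V, ∀ x : V, σ x = g x + t)
    (hN : ∀ σ : Equiv.Perm V, σ ∈ N ↔ ∃ t : V, ∀ x : V, σ x = x + t)
    (r : ℕ) (hr : 3 ≤ r)
    (Ms : Fin r → Submodule (ZMod p) V) (hMsinj : Function.Injective Ms)
    -- (a) `G` has rank 2 or 3 in its (transitive) action on `V`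
    (ha : {S : Set V | ∃ y : V, S = {z | ∃ σ ∈ G, σ 0 = 0 ∧ σ y = z}}.ncard ∈ ({2, 3} : Set ℕ))
    -- (b) `{M₁, …, M_r}` is a `G₀`-orbit of subspaces on which `G₀` acts 2-transitively
    (hb1 : ∀ g ∈ G₀, ∀ i : Fin r, ∃ j : Fin r,
      (Ms i).map (g : V →ₗ[ZMod p] V) = Ms j)
    (hb2 : ∀ i j : Fin r, ∃ g ∈ G₀, (Ms i).map (g : V →ₗ[ZMod p] V) = Ms j)
    (hb3 : ∀ i j i' j' : Fin r, i ≠ j → i' ≠ j' → ∃ g ∈ G₀,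
      (Ms i).map (g : V →ₗ[ZMod p] V) = Ms i' ∧ (Ms j).map (g : V →ₗ[ZMod p] V) = Ms j')
    -- (c) `V = M₁ + M₂`
    (hc : Ms ⟨0, by omega⟩ ⊔ Ms ⟨1, by omega⟩ = ⊤)
    -- (d) the stabiliser of `M₁` in `G₀` is transitive on the nontrivial cosets of `M₁`
    (hd : ∀ v w : V, v ∉ Ms ⟨0, by omega⟩ → w ∉ Ms ⟨0, by omega⟩ →
      ∃ g ∈ G₀, (Ms ⟨0, by omega⟩).map (g : V →ₗ[ZMod p] V) = Ms ⟨0, by omega⟩ ∧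
        g v - w ∈ Ms ⟨0, by omega⟩)
    -- (e) `⋃ᵢ Mᵢ ∖ {0}` is a single `G₀`-orbit
    (he : ∀ x y : V, x ≠ 0 → y ≠ 0 → (∃ i, x ∈ Ms i) → (∃ i, y ∈ Ms i) →
      ∃ g ∈ G₀, g x = y) :
    -- the block set: all cosets of the subspaces Mᵢ
    ∀ 𝓑 : Set (Set V), 𝓑 = {s : Set V | ∃ (i : Fin r) (v : V), s = {x : V | x - v ∈ Ms i}} →
      -- G acts as a group of automorphisms of the design D
      ((∀ σ ∈ G, ∀ s ∈ 𝓑, (fun z => σ z) '' s ∈ 𝓑) ∧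
      -- D is G-pairwise transitive
      SetPT 𝓑 G ∧
      -- D is N-nicely affine with r parallel classes of blocks
      SetNA 𝓑 N ∧
      {O : Set (Set V) | ∃ s ∈ 𝓑, O = {s' | ∃ σ ∈ N, (fun z => σ z) '' s = s'}}.ncard = r ∧
      -- the incidence graph Γ(D) is r-starlike relative to N and locally (G,4)-distance
      -- transitive, where G and N act on Γ(D) through the natural lift φ
      ∃ φ : ↥G →* Equiv.Perm (V ⊕ ↥𝓑),
        (∀ g : ↥G, ∀ x : V, φ g (Sum.inl x) = Sum.inl ((g : Equiv.Perm V) x)) ∧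
        (∀ g : ↥G, ∀ s : ↥𝓑, ∃ hs : (fun z => (g : Equiv.Perm V) z) '' (s : Set V) ∈ 𝓑,
          φ g (Sum.inr s) = Sum.inr ⟨(fun z => (g : Equiv.Perm V) z) '' (s : Set V), hs⟩) ∧
        (∀ g : ↥G, IsGraphAut (DIncGraph (fun (x : V) (s : ↥𝓑) => x ∈ (s : Set V))) (φ g)) ∧
        IsBipartition (DIncGraph (fun (x : V) (s : ↥𝓑) => x ∈ (s : Set V)))
          (Set.range (Sum.inl : V → V ⊕ ↥𝓑)) ∧
        IsStarlike (DIncGraph (fun (x : V) (s : ↥𝓑) => x ∈ (s : Set V)))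
          (Set.range (Sum.inl : V → V ⊕ ↥𝓑)) (Subgroup.map φ (N.subgroupOf G)) r ∧
        LocallyDistTrans (DIncGraph (fun (x : V) (s : ↥𝓑) => x ∈ (s : Set V)))
          φ.range 4) := by
  classical
  intro 𝓑 h𝓑
  have hmem : ∀ s : Set V, s ∈ 𝓑 ↔ ∃ (i : Fin r) (v : V), s = cst Ms i v := by
    intro s; rw [h𝓑]; exact Iff.rfl
  have h01 : (⟨0, by omega⟩ : Fin r) ≠ ⟨1, by omega⟩ := by
    intro h
    simpa [Fin.ext_iff] using h
  have hsup : ∀ i j : Fin r, i ≠ j → Ms i ⊔ Ms j = ⊤ := sup_all hb3 hc h01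
  have hNG : ∀ σ ∈ N, σ ∈ G := by
    intro σ hσ
    obtain ⟨t, ht⟩ := (hN σ).1 hσ
    exact (hG σ).2 ⟨1, G₀.one_mem, t, fun x => by simpa using ht x⟩
  have haddR : ∀ t : V, Equiv.addRight t ∈ N := fun t => (hN _).2 ⟨t, fun x => rfl⟩
  have hBmem : ∀ (i : Fin r) (v : V), cst Ms i v ∈ 𝓑 := fun i v => (hmem _).2 ⟨i, v, rfl⟩
  have hGacts : ∀ σ ∈ G, ∀ s ∈ 𝓑, (fun z => σ z) '' s ∈ 𝓑 := by
    intro σ hσ s hs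
    obtain ⟨i, v, rfl⟩ := (hmem s).1 hs
    obtain ⟨g, hg, t, hgt⟩ := (hG σ).1 hσ
    obtain ⟨j, hj⟩ := hb1 g hg i
    refine (hmem _).2 ⟨j, g v + t, ?_⟩
    rw [image_eq_of_pointwise (τ := aff g t) hgt, aff_image_cst hj]
  have hNimg : ∀ σ ∈ N, ∀ (i : Fin r) (v : V),
      ∃ t : V, (fun z => σ z) '' cst Ms i v = cst Ms i (v + t) := by
    intro σ hσ i v
    obtain ⟨t, ht⟩ := (hN σ).1 hσ
    exact ⟨t, by rw [image_eq_of_pointwise (τ := Equiv.addRight t) ht, addRight_image_cst]⟩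
  have hPT1 := ptPT1 hG hb2
  have hPT2 := ptPT2 hG ⟨0, by omega⟩ hb2 hd
  have hPT5 := ptPT5 hG hMsinj hb3
  have hPT6 := ptPT6 hG hMsinj ⟨0, by omega⟩ hb2 hd hsup
  have htC := transC hG ha hb1 (ms_exists_nonzero hMsinj hb2 h01)
  have hcol : ∀ x y : V, (∃ s ∈ 𝓑, x ∈ s ∧ y ∈ s) → ∃ i, y - x ∈ Ms i := by
    rintro x y ⟨s, hs, hxs, hys⟩
    obtain ⟨i, v, rfl⟩ := (hmem s).1 hs
    refine ⟨i, ?_⟩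
    have h2 : y - x = (y - v) - (x - v) := by abel
    rw [h2]
    exact Submodule.sub_mem _ hys hxs
  have hncol : ∀ x y : V, ¬(∃ s ∈ 𝓑, x ∈ s ∧ y ∈ s) → ∀ i, y - x ∉ Ms i := by
    intro x y h i hyx
    exact h ⟨cst Ms i x, hBmem i x, self_mem_cst _ _ _, hyx⟩
  have hSPT : SetPT 𝓑 G := by
    refine ⟨?_, ?_, ?_, ?_, ?_, ?_⟩
    · intro x s hs x' s' hs' hx hx'
      obtain ⟨i, v, rfl⟩ := (hmem s).1 hs
      obtain ⟨i', v', rfl⟩ := (hmem s').1 hs'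
      exact hPT1 x i v x' i' v' hx hx'
    · intro x s hs x' s' hs' hx hx'
      obtain ⟨i, v, rfl⟩ := (hmem s).1 hs
      obtain ⟨i', v', rfl⟩ := (hmem s').1 hs'
      exact hPT2 x i v x' i' v' hx hx'
    · intro x y x' y' hxy hxy' h1 h2
      exact ptPT3 hG he x y x' y' hxy hxy' (hcol x y h1) (hcol x' y' h2)
    · intro x y x' y' hxy hxy' h1 h2
      obtain ⟨g, hg, hgxy⟩ := htC (y - x) (y' - x') (hncol x y h1) (hncol x' y' h2)
      exact aff_send_pair hG hg hgxy
    · intro s hs t ht s' hs' t' ht' hst hst' h1 h2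
      obtain ⟨i, v, rfl⟩ := (hmem s).1 hs
      obtain ⟨j, w, rfl⟩ := (hmem t).1 ht
      obtain ⟨i', v', rfl⟩ := (hmem s').1 hs'
      obtain ⟨j', w', rfl⟩ := (hmem t').1 ht'
      exact hPT5 i v j w i' v' j' w' hst hst' h1 h2
    · intro s hs t ht s' hs' t' ht' hst hst' h1 h2
      obtain ⟨i, v, rfl⟩ := (hmem s).1 hs
      obtain ⟨j, w, rfl⟩ := (hmem t).1 ht
      obtain ⟨i', v', rfl⟩ := (hmem s').1 hs'
      obtain ⟨j', w', rfl⟩ := (hmem t').1 ht'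
      exact hPT6 i v j w i' v' j' w' hst hst' h1 h2
  have hdisjN : ∀ (i : Fin r) (v w : V), cst Ms i v ≠ cst Ms i w →
      cst Ms i v ∩ cst Ms i w = ∅ := by
    intro i v w hne
    rw [Set.eq_empty_iff_forall_notMem]
    rintro z ⟨hz1, hz2⟩
    exact hne ((cst_eq_self_of_mem hz1).trans (cst_eq_self_of_mem hz2).symm)
  have hSNA : SetNA 𝓑 N := by
    refine ⟨fun x y => ⟨Equiv.addRight (y - x), haddR _, by simp⟩, ?_, ?_⟩
    · intro n hn s hs
      obtain ⟨i, v, rfl⟩ := (hmem s).1 hs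
      obtain ⟨t, himg⟩ := hNimg n hn i v
      rw [himg]
      exact hBmem _ _
    · refine ⟨((Ms ⟨0, by omega⟩ : Set V) ∩ (Ms ⟨1, by omega⟩ : Set V)).ncard, ?_⟩
      intro s hs s' hs' hne
      obtain ⟨i, v, rfl⟩ := (hmem s).1 hs
      obtain ⟨i', v', rfl⟩ := (hmem s').1 hs'
      constructor
      · rintro ⟨n, hn, himg⟩
        obtain ⟨t, himg2⟩ := hNimg n hn i v
        rw [himg2] at himg
        obtain ⟨hii, -⟩ := cst_eq_inj hMsinj himg
        subst hii
        exact hdisjN i v v' hne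
      · intro hnot
        have hii : i ≠ i' := by
          rintro rfl
          exact hnot ⟨Equiv.addRight (v' - v), haddR _, by
            rw [addRight_image_cst, show v + (v' - v) = v' by abel]⟩
        obtain ⟨z, hz1, hz2⟩ := cst_meet (hsup i i' hii) v v'
        rw [cst_inter_eq hz1 hz2, Set.ncard_image_of_injective _ (add_right_injective z)]
        obtain ⟨g, hg, hm1, hm2⟩ := hb3 ⟨0, by omega⟩ ⟨1, by omega⟩ i i' h01 hii
        rw [← img_inter hm1 hm2, Set.ncard_image_of_injective _ g.injective]
  have horbN : ∀ s s' : Set V, (∃ σ ∈ N, (fun z => σ z) '' s = s') →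
      {t | ∃ σ ∈ N, (fun z => σ z) '' s = t} = {t | ∃ σ ∈ N, (fun z => σ z) '' s' = t} := by
    rintro s s' ⟨σ, hσ, rfl⟩
    ext u
    constructor
    · rintro ⟨τ, hτ, rfl⟩
      refine ⟨τ * σ⁻¹, N.mul_mem hτ (N.inv_mem hσ), ?_⟩
      rw [perm_image_mul, perm_inv_image σ rfl]
    · rintro ⟨τ, hτ, rfl⟩
      exact ⟨τ * σ, N.mul_mem hτ hσ, perm_image_mul _ _ _⟩
  have hcount : {O : Set (Set V) | ∃ s ∈ 𝓑,
      O = {s' | ∃ σ ∈ N, (fun z => σ z) '' s = s'}}.ncard = r := by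
    have hFinj : Function.Injective
        (fun i : Fin r => {s' | ∃ σ ∈ N, (fun z => σ z) '' cst Ms i 0 = s'}) := by
      intro i j hij
      have hij2 : {s' | ∃ σ ∈ N, (fun z => σ z) '' cst Ms i 0 = s'} =
          {s' | ∃ σ ∈ N, (fun z => σ z) '' cst Ms j 0 = s'} := hij
      have hself : cst Ms j 0 ∈ {s' | ∃ σ ∈ N, (fun z => σ z) '' cst Ms j 0 = s'} :=
        ⟨1, N.one_mem, by simp⟩
      rw [← hij2] at hself
      obtain ⟨σ, hσ, himg⟩ := hself
      obtain ⟨t, himg2⟩ := hNimg σ hσ i 0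
      rw [himg2] at himg
      exact (cst_eq_inj hMsinj himg).1
    have hseteq : {O : Set (Set V) | ∃ s ∈ 𝓑, O = {s' | ∃ σ ∈ N, (fun z => σ z) '' s = s'}} =
        Set.range (fun i : Fin r => {s' | ∃ σ ∈ N, (fun z => σ z) '' cst Ms i 0 = s'}) := by
      ext O
      constructor
      · rintro ⟨s, hs, rfl⟩
        obtain ⟨i, v, rfl⟩ := (hmem s).1 hs
        exact ⟨i, horbN _ _ ⟨Equiv.addRight v, haddR v, by rw [addRight_image_cst, zero_add]⟩⟩
      · rintro ⟨i, rfl⟩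
        exact ⟨cst Ms i 0, hBmem i 0, rfl⟩
    rw [hseteq, ← Set.image_univ, Set.ncard_image_of_injective _ hFinj, Set.ncard_univ,
      Nat.card_eq_fintype_card, Fintype.card_fin]
  obtain ⟨PT1, PT2, PT3, PT4, PT5, PT6⟩ := hSPT
  refine ⟨hGacts, ⟨PT1, PT2, PT3, PT4, PT5, PT6⟩, hSNA, hcount, liftPerm 𝓑 G hGacts,
    fun g x => rfl, fun g s => ⟨hGacts _ g.2 _ s.2, rfl⟩, ?_, ?_, ?_, ?_⟩
  · -- graph automorphisms
    intro g u v
    rcases u with x | s <;> rcases v with y | t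
    · simp only [liftPerm_inl]
      constructor
      · exact fun h => absurd h (auxDInc_adj_inl_inl _ _ _)
      · exact fun h => absurd h (auxDInc_adj_inl_inl _ _ _)
    · rw [liftPerm_inl, liftPerm_inr, auxDInc_adj_inl_inr, auxDInc_adj_inl_inr]
      exact (g : Equiv.Perm V).injective.mem_set_image
    · rw [liftPerm_inr, liftPerm_inl, auxDInc_adj_inr_inl, auxDInc_adj_inr_inl]
      exact (g : Equiv.Perm V).injective.mem_set_image
    · simp only [liftPerm_inr]
      constructor
      · exact fun h => absurd h (auxDInc_adj_inr_inr _ _ _)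
      · exact fun h => absurd h (auxDInc_adj_inr_inr _ _ _)
  · -- bipartition
    intro u v huv
    rcases u with x | s <;> rcases v with y | t
    · exact absurd huv (auxDInc_adj_inl_inl _ _ _)
    · simp
    · simp
    · exact absurd huv (auxDInc_adj_inr_inr _ _ _)
  · -- starlike
    have hmemN' : ∀ n : Equiv.Perm (V ⊕ ↥𝓑),
        n ∈ Subgroup.map (liftPerm 𝓑 G hGacts) (N.subgroupOf G) ↔
        ∃ σ : Equiv.Perm V, ∃ hσG : σ ∈ G, σ ∈ N ∧ liftPerm 𝓑 G hGacts ⟨σ, hσG⟩ = n := by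
      intro n
      constructor
      · rintro ⟨⟨σ, hσG⟩, hσN, rfl⟩
        exact ⟨σ, hσG, (Subgroup.mem_subgroupOf).1 hσN, rfl⟩
      · rintro ⟨σ, hσG, hσN, rfl⟩
        exact ⟨⟨σ, hσG⟩, (Subgroup.mem_subgroupOf).2 hσN, rfl⟩
    refine ⟨?_, ?_, ?_⟩
    · intro n hn v
      obtain ⟨σ, hσG, hσN, rfl⟩ := (hmemN' n).1 hn
      rcases v with x | s
      · simp [liftPerm_inl]
      · simp [liftPerm_inr]
    · rintro x ⟨a, rfl⟩ y ⟨b, rfl⟩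
      have hσG := hNG _ (haddR (b - a))
      refine ⟨liftPerm 𝓑 G hGacts ⟨Equiv.addRight (b - a), hσG⟩,
        (hmemN' _).2 ⟨_, hσG, haddR _, rfl⟩, ?_⟩
      rw [liftPerm_inl]
      have h2 : (Equiv.addRight (b - a)) a = b := by
        simp only [Equiv.coe_addRight]
        abel
      rw [h2]
    · have hkey : ∀ (s : Set V) (hs : s ∈ 𝓑) (s' : Set V) (hs' : s' ∈ 𝓑),
          (∃ σ ∈ N, (fun z => σ z) '' s = s') →
          POrbit (Subgroup.map (liftPerm 𝓑 G hGacts) (N.subgroupOf G))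
              (Sum.inr (⟨s, hs⟩ : ↥𝓑)) =
            POrbit (Subgroup.map (liftPerm 𝓑 G hGacts) (N.subgroupOf G))
              (Sum.inr (⟨s', hs'⟩ : ↥𝓑)) := by
        rintro s hs s' hs' ⟨σ, hσ, himg⟩
        apply auxPOrbit_eq
        have hσG := hNG σ hσ
        refine ⟨liftPerm 𝓑 G hGacts ⟨σ, hσG⟩, (hmemN' _).2 ⟨σ, hσG, hσ, rfl⟩, ?_⟩
        rw [liftPerm_inr]
        exact congrArg Sum.inr (Subtype.ext himg)
      have hFinj : Function.Injective (fun i : Fin r =>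
          POrbit (Subgroup.map (liftPerm 𝓑 G hGacts) (N.subgroupOf G))
            (Sum.inr (⟨cst Ms i 0, hBmem i 0⟩ : ↥𝓑))) := by
        intro i j hij
        have hij2 : POrbit (Subgroup.map (liftPerm 𝓑 G hGacts) (N.subgroupOf G))
              (Sum.inr (⟨cst Ms i 0, hBmem i 0⟩ : ↥𝓑)) =
            POrbit (Subgroup.map (liftPerm 𝓑 G hGacts) (N.subgroupOf G))
              (Sum.inr (⟨cst Ms j 0, hBmem j 0⟩ : ↥𝓑)) := hij
        have hself := auxPOrbit_self (Subgroup.map (liftPerm 𝓑 G hGacts) (N.subgroupOf G))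
          (Sum.inr (⟨cst Ms j 0, hBmem j 0⟩ : ↥𝓑))
        rw [← hij2] at hself
        obtain ⟨n, hn, heq⟩ := hself
        obtain ⟨σ, hσG, hσN, rfl⟩ := (hmemN' n).1 hn
        rw [liftPerm_inr] at heq
        have heq2 : (fun z => σ z) '' cst Ms i 0 = cst Ms j 0 :=
          congrArg Subtype.val (Sum.inr.inj heq)
        obtain ⟨t, himg2⟩ := hNimg σ hσN i 0
        rw [himg2] at heq2
        exact (cst_eq_inj hMsinj heq2).1
      have hseteq : {S : Set (V ⊕ ↥𝓑) | ∃ x ∈ (Set.range (Sum.inl : V → V ⊕ ↥𝓑))ᶜ,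
            S = POrbit (Subgroup.map (liftPerm 𝓑 G hGacts) (N.subgroupOf G)) x} =
          Set.range (fun i : Fin r =>
            POrbit (Subgroup.map (liftPerm 𝓑 G hGacts) (N.subgroupOf G))
              (Sum.inr (⟨cst Ms i 0, hBmem i 0⟩ : ↥𝓑))) := by
        ext O
        constructor
        · rintro ⟨x, hx, rfl⟩
          rcases x with a | s
          · exact absurd ⟨a, rfl⟩ hx
          · obtain ⟨i, v, hiv⟩ := (hmem ↑s).1 s.2
            refine ⟨i, ?_⟩
            have h2 := hkey (cst Ms i 0) (hBmem i 0) (↑s) s.2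
              ⟨Equiv.addRight v, haddR v, by rw [addRight_image_cst, zero_add, ← hiv]⟩
            simpa using h2
        · rintro ⟨i, rfl⟩
          exact ⟨Sum.inr (⟨cst Ms i 0, hBmem i 0⟩ : ↥𝓑), by simp, rfl⟩
      rw [hseteq, ← Set.image_univ, Set.ncard_image_of_injective _ hFinj, Set.ncard_univ,
        Nat.card_eq_fintype_card, Fintype.card_fin]
  · -- locally (G,4)-distance transitive
    have hadjPB : ∀ (x : V) (s : ↥𝓑), x ∈ (s : Set V) →
        (DIncGraph fun (x : V) (s : ↥𝓑) => x ∈ (s : Set V)).Adj (Sum.inl x) (Sum.inr s) :=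
      fun x s h => (auxDInc_adj_inl_inr _ x s).2 h
    have hbip : IsBipartition (DIncGraph fun (x : V) (s : ↥𝓑) => x ∈ (s : Set V))
        (Set.range (Sum.inl : V → V ⊕ ↥𝓑)) := by
      intro u v huv
      rcases u with x | s <;> rcases v with y | t
      · exact absurd huv (auxDInc_adj_inl_inl _ _ _)
      · simp
      · simp
      · exact absurd huv (auxDInc_adj_inr_inr _ _ _)
    have hreach0 : ∀ x : V,
        (DIncGraph fun (x : V) (s : ↥𝓑) => x ∈ (s : Set V)).Reachable
          (Sum.inl x) (Sum.inl 0) := by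
      intro x
      have hx : x ∈ Ms ⟨0, by omega⟩ ⊔ Ms ⟨1, by omega⟩ := by rw [hc]; trivial
      obtain ⟨a, haM, b, hbM, hab⟩ := Submodule.mem_sup.mp hx
      have h1 := hadjPB x ⟨cst Ms ⟨1, by omega⟩ a, hBmem _ _⟩ (by
        rw [mem_cst, show x - a = b from by rw [← hab]; abel]; exact hbM)
      have h2 := hadjPB a ⟨cst Ms ⟨1, by omega⟩ a, hBmem _ _⟩ (self_mem_cst _ _ _)
      have h3 := hadjPB a ⟨cst Ms ⟨0, by omega⟩ 0, hBmem _ _⟩ (by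
        rw [mem_cst, sub_zero]; exact haM)
      have h4 := hadjPB 0 ⟨cst Ms ⟨0, by omega⟩ 0, hBmem _ _⟩ (by
        rw [mem_cst, sub_zero]; exact Submodule.zero_mem _)
      exact h1.reachable.trans (h2.symm.reachable.trans (h3.reachable.trans h4.symm.reachable))
    have hreach : ∀ u : V ⊕ ↥𝓑,
        (DIncGraph fun (x : V) (s : ↥𝓑) => x ∈ (s : Set V)).Reachable u (Sum.inl 0) := by
      intro u
      rcases u with x | s
      · exact hreach0 x
      · obtain ⟨i, v, hiv⟩ := (hmem ↑s).1 s.2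
        have hv : v ∈ (s : Set V) := by rw [hiv]; exact self_mem_cst _ _ _
        exact (hadjPB v s hv).symm.reachable.trans (hreach0 v)
    have hconn : (DIncGraph fun (x : V) (s : ↥𝓑) => x ∈ (s : Set V)).Connected := by
      rw [SimpleGraph.connected_iff]
      exact ⟨fun u v => (hreach u).trans (hreach v).symm, ⟨Sum.inl 0⟩⟩
    haveI : Nonempty (V ⊕ ↥𝓑) := ⟨Sum.inl 0⟩
    have hediam : (DIncGraph fun (x : V) (s : ↥𝓑) => x ∈ (s : Set V)).ediam ≠ ⊤ := by
      obtain ⟨u, v, huv⟩ := SimpleGraph.exists_edist_eq_ediam_of_finite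
        (G := DIncGraph fun (x : V) (s : ↥𝓑) => x ∈ (s : Set V))
      rw [← huv]
      exact SimpleGraph.edist_ne_top_iff_reachable.2 (hconn.preconnected u v)
    have hnadj : ∀ u w : V ⊕ ↥𝓑,
        (DIncGraph fun (x : V) (s : ↥𝓑) => x ∈ (s : Set V)).Adj u w →
        (DIncGraph fun (x : V) (s : ↥𝓑) => x ∈ (s : Set V)).dist u w ≤ 1 := by
      intro u w h
      have h2 := SimpleGraph.dist_le (SimpleGraph.Walk.cons h SimpleGraph.Walk.nil)
      simpa using h2
    have hcn : ∀ u w z : V ⊕ ↥𝓑,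
        (DIncGraph fun (x : V) (s : ↥𝓑) => x ∈ (s : Set V)).Adj u z →
        (DIncGraph fun (x : V) (s : ↥𝓑) => x ∈ (s : Set V)).Adj z w →
        (DIncGraph fun (x : V) (s : ↥𝓑) => x ∈ (s : Set V)).dist u w ≤ 2 := by
      intro u w z h1 h2
      have h3 := SimpleGraph.dist_le
        (SimpleGraph.Walk.cons h1 (SimpleGraph.Walk.cons h2 SimpleGraph.Walk.nil))
      simpa using h3
    constructor
    · -- 4 ≤ diam
      obtain ⟨w0, hw0⟩ : ∃ w, w ∉ Ms ⟨0, by omega⟩ := by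
        by_contra hco
        push_neg at hco
        exact ms_ne_top hMsinj hb2 h01 ⟨0, by omega⟩ (Submodule.eq_top_iff'.2 hco)
      obtain ⟨z, hz1, hz2⟩ := cst_meet (hsup ⟨1, by omega⟩ ⟨0, by omega⟩ (Ne.symm h01)) 0 w0
      have hnecst : cst Ms ⟨0, by omega⟩ 0 ≠ cst Ms ⟨0, by omega⟩ w0 := by
        intro heq
        have h5 := (cst_eq_inj hMsinj heq).2
        rw [sub_zero] at h5
        exact hw0 h5
      have a1 := hadjPB 0 ⟨cst Ms ⟨0, by omega⟩ 0, hBmem _ _⟩ (by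
        rw [mem_cst, sub_zero]; exact Submodule.zero_mem _)
      have a2 := hadjPB 0 ⟨cst Ms ⟨1, by omega⟩ 0, hBmem _ _⟩ (by
        rw [mem_cst, sub_zero]; exact Submodule.zero_mem _)
      have a3 := hadjPB z ⟨cst Ms ⟨1, by omega⟩ 0, hBmem _ _⟩ hz1
      have a4 := hadjPB z ⟨cst Ms ⟨0, by omega⟩ w0, hBmem _ _⟩ hz2
      have hle4 : (DIncGraph fun (x : V) (s : ↥𝓑) => x ∈ (s : Set V)).dist
          (Sum.inr (⟨cst Ms ⟨0, by omega⟩ 0, hBmem _ _⟩ : ↥𝓑))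
          (Sum.inr (⟨cst Ms ⟨0, by omega⟩ w0, hBmem _ _⟩ : ↥𝓑)) ≤ 4 := by
        have hp2 := SimpleGraph.dist_le
          (SimpleGraph.Walk.cons a1.symm (SimpleGraph.Walk.cons a2
            (SimpleGraph.Walk.cons a3.symm (SimpleGraph.Walk.cons a4 SimpleGraph.Walk.nil))))
        simpa using hp2
      obtain ⟨q, hq⟩ := hconn.exists_walk_length_eq_dist
        (Sum.inr (⟨cst Ms ⟨0, by omega⟩ 0, hBmem _ _⟩ : ↥𝓑))
        (Sum.inr (⟨cst Ms ⟨0, by omega⟩ w0, hBmem _ _⟩ : ↥𝓑))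
      have heven : Even ((DIncGraph fun (x : V) (s : ↥𝓑) => x ∈ (s : Set V)).dist
          (Sum.inr (⟨cst Ms ⟨0, by omega⟩ 0, hBmem _ _⟩ : ↥𝓑))
          (Sum.inr (⟨cst Ms ⟨0, by omega⟩ w0, hBmem _ _⟩ : ↥𝓑))) := by
        rw [← hq]
        exact (auxWalk_parity hbip q).1 (by simp)
      have hne0 : (DIncGraph fun (x : V) (s : ↥𝓑) => x ∈ (s : Set V)).dist
          (Sum.inr (⟨cst Ms ⟨0, by omega⟩ 0, hBmem _ _⟩ : ↥𝓑))
          (Sum.inr (⟨cst Ms ⟨0, by omega⟩ w0, hBmem _ _⟩ : ↥𝓑)) ≠ 0 := by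
        intro h0
        have h6 := ((hconn.preconnected _ _).dist_eq_zero_iff).1 h0
        exact hnecst (congrArg Subtype.val (Sum.inr.inj h6))
      have hne2 : (DIncGraph fun (x : V) (s : ↥𝓑) => x ∈ (s : Set V)).dist
          (Sum.inr (⟨cst Ms ⟨0, by omega⟩ 0, hBmem _ _⟩ : ↥𝓑))
          (Sum.inr (⟨cst Ms ⟨0, by omega⟩ w0, hBmem _ _⟩ : ↥𝓑)) ≠ 2 := by
        intro h2
        obtain ⟨zz, hza, hzb⟩ := walk_two q (by rw [hq, h2])
        rcases zz with c | u
        · have hc1 := (auxDInc_adj_inr_inl _ _ _).1 hza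
          have hc2 := (auxDInc_adj_inl_inr _ _ _).1 hzb
          have hdj := hdisjN ⟨0, by omega⟩ 0 w0 hnecst
          rw [Set.eq_empty_iff_forall_notMem] at hdj
          exact hdj c ⟨hc1, hc2⟩
        · exact absurd hza (auxDInc_adj_inr_inr _ _ _)
      have h4 : (DIncGraph fun (x : V) (s : ↥𝓑) => x ∈ (s : Set V)).dist
          (Sum.inr (⟨cst Ms ⟨0, by omega⟩ 0, hBmem _ _⟩ : ↥𝓑))
          (Sum.inr (⟨cst Ms ⟨0, by omega⟩ w0, hBmem _ _⟩ : ↥𝓑)) = 4 := by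
        obtain ⟨k, hk⟩ := heven
        omega
      calc (4 : ℕ) = _ := h4.symm
        _ ≤ _ := SimpleGraph.dist_le_diam hediam
    · -- transitivity on spheres
      intro v x y i hi1 hi4 hdx hdy
      obtain ⟨px, hpx⟩ := hconn.exists_walk_length_eq_dist v x
      obtain ⟨py, hpy⟩ := hconn.exists_walk_length_eq_dist v y
      have hparx : ((v ∈ Set.range (Sum.inl : V → V ⊕ ↥𝓑)) ↔
          (x ∈ Set.range (Sum.inl : V → V ⊕ ↥𝓑))) ↔ Even i := by
        rw [← hdx, ← hpx]
        exact auxWalk_parity hbip px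
      have hpary : ((v ∈ Set.range (Sum.inl : V → V ⊕ ↥𝓑)) ↔
          (y ∈ Set.range (Sum.inl : V → V ⊕ ↥𝓑))) ↔ Even i := by
        rw [← hdy, ← hpy]
        exact auxWalk_parity hbip py
      have hvx : v ≠ x := by
        intro h; subst h; rw [SimpleGraph.dist_self] at hdx; omega
      have hvy : v ≠ y := by
        intro h; subst h; rw [SimpleGraph.dist_self] at hdy; omega
      rcases v with a | s
      · interval_cases i
        · -- i = 1 : flags based at a point
          rcases x with b | t
          · exact absurd (hparx.1 (by simp)) (by decide)
          rcases y with b' | t'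
          · exact absurd (hpary.1 (by simp)) (by decide)
          have hax := walk_one px (by rw [hpx, hdx])
          have hay := walk_one py (by rw [hpy, hdy])
          have h1 := (auxDInc_adj_inl_inr _ _ _).1 hax
          have h2 := (auxDInc_adj_inl_inr _ _ _).1 hay
          obtain ⟨σ, hσ, hσa, hσimg⟩ := PT1 a ↑t t.2 a ↑t' t'.2 h1 h2
          refine ⟨liftPerm 𝓑 G hGacts ⟨σ, hσ⟩, ⟨⟨σ, hσ⟩, rfl⟩, ?_, ?_⟩
          · rw [liftPerm_inl, hσa]
          · rw [liftPerm_inr]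
            exact congrArg Sum.inr (Subtype.ext hσimg)
        · -- i = 2 : collinear points
          rcases x with b | t
          swap
          · have h0 := hparx.2 (by decide); simp at h0
          rcases y with b' | t'
          swap
          · have h0 := hpary.2 (by decide); simp at h0
          obtain ⟨z, hz1, hz2⟩ := walk_two px (by rw [hpx, hdx])
          rcases z with c | u
          · exact absurd hz1 (auxDInc_adj_inl_inl _ _ _)
          obtain ⟨z', hz1', hz2'⟩ := walk_two py (by rw [hpy, hdy])
          rcases z' with c' | u'
          · exact absurd hz1' (auxDInc_adj_inl_inl _ _ _)
          have h1 := (auxDInc_adj_inl_inr _ _ _).1 hz1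
          have h2 := (auxDInc_adj_inr_inl _ _ _).1 hz2
          have h1' := (auxDInc_adj_inl_inr _ _ _).1 hz1'
          have h2' := (auxDInc_adj_inr_inl _ _ _).1 hz2'
          have hab : a ≠ b := fun h => hvx (by rw [h])
          have hab' : a ≠ b' := fun h => hvy (by rw [h])
          obtain ⟨σ, hσ, hσ1, hσ2⟩ := PT3 a b a b' hab hab'
            ⟨↑u, u.2, h1, h2⟩ ⟨↑u', u'.2, h1', h2'⟩
          refine ⟨liftPerm 𝓑 G hGacts ⟨σ, hσ⟩, ⟨⟨σ, hσ⟩, rfl⟩, ?_, ?_⟩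
          · rw [liftPerm_inl, hσ1]
          · rw [liftPerm_inl, hσ2]
        · -- i = 3 : antiflags based at a point
          rcases x with b | t
          · exact absurd (hparx.1 (by simp)) (by decide)
          rcases y with b' | t'
          · exact absurd (hpary.1 (by simp)) (by decide)
          have hnx : a ∉ (t : Set V) := by
            intro hmem2
            have h5 := hnadj _ _ (hadjPB a t hmem2)
            rw [hdx] at h5; omega
          have hny : a ∉ (t' : Set V) := by
            intro hmem2
            have h5 := hnadj _ _ (hadjPB a t' hmem2)
            rw [hdy] at h5; omega
          obtain ⟨σ, hσ, hσa, hσimg⟩ := PT2 a ↑t t.2 a ↑t' t'.2 hnx hny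
          refine ⟨liftPerm 𝓑 G hGacts ⟨σ, hσ⟩, ⟨⟨σ, hσ⟩, rfl⟩, ?_, ?_⟩
          · rw [liftPerm_inl, hσa]
          · rw [liftPerm_inr]
            exact congrArg Sum.inr (Subtype.ext hσimg)
        · -- i = 4 : non-collinear points
          rcases x with b | t
          swap
          · have h0 := hparx.2 (by decide); simp at h0
          rcases y with b' | t'
          swap
          · have h0 := hpary.2 (by decide); simp at h0
          have hab : a ≠ b := fun h => hvx (by rw [h])
          have hab' : a ≠ b' := fun h => hvy (by rw [h])
          have hnc1 : ¬ ∃ s' ∈ 𝓑, a ∈ s' ∧ b ∈ s' := by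
            rintro ⟨s', hs', ha', hb'⟩
            have h5 := hcn _ _ _ (hadjPB a ⟨s', hs'⟩ ha') ((hadjPB b ⟨s', hs'⟩ hb').symm)
            rw [hdx] at h5; omega
          have hnc2 : ¬ ∃ s' ∈ 𝓑, a ∈ s' ∧ b' ∈ s' := by
            rintro ⟨s', hs', ha', hb'⟩
            have h5 := hcn _ _ _ (hadjPB a ⟨s', hs'⟩ ha') ((hadjPB b' ⟨s', hs'⟩ hb').symm)
            rw [hdy] at h5; omega
          obtain ⟨σ, hσ, hσ1, hσ2⟩ := PT4 a b a b' hab hab' hnc1 hnc2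
          refine ⟨liftPerm 𝓑 G hGacts ⟨σ, hσ⟩, ⟨⟨σ, hσ⟩, rfl⟩, ?_, ?_⟩
          · rw [liftPerm_inl, hσ1]
          · rw [liftPerm_inl, hσ2]
      · interval_cases i
        · -- i = 1 : flags based at a block
          rcases x with b | t
          swap
          · exact absurd (hparx.1 (by simp)) (by decide)
          rcases y with b' | t'
          swap
          · exact absurd (hpary.1 (by simp)) (by decide)
          have hax := walk_one px (by rw [hpx, hdx])
          have hay := walk_one py (by rw [hpy, hdy])
          have h1 := (auxDInc_adj_inr_inl _ _ _).1 hax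
          have h2 := (auxDInc_adj_inr_inl _ _ _).1 hay
          obtain ⟨σ, hσ, hσb, hσimg⟩ := PT1 b ↑s s.2 b' ↑s s.2 h1 h2
          refine ⟨liftPerm 𝓑 G hGacts ⟨σ, hσ⟩, ⟨⟨σ, hσ⟩, rfl⟩, ?_, ?_⟩
          · rw [liftPerm_inr]
            exact congrArg Sum.inr (Subtype.ext hσimg)
          · rw [liftPerm_inl, hσb]
        · -- i = 2 : intersecting blocks
          rcases x with b | t
          · have h0 := hparx.2 (by decide); simp at h0
          rcases y with b' | t'
          · have h0 := hpary.2 (by decide); simp at h0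
          obtain ⟨z, hz1, hz2⟩ := walk_two px (by rw [hpx, hdx])
          rcases z with c | u
          swap
          · exact absurd hz1 (auxDInc_adj_inr_inr _ _ _)
          obtain ⟨z', hz1', hz2'⟩ := walk_two py (by rw [hpy, hdy])
          rcases z' with c' | u'
          swap
          · exact absurd hz1' (auxDInc_adj_inr_inr _ _ _)
          have h1 := (auxDInc_adj_inr_inl _ _ _).1 hz1
          have h2 := (auxDInc_adj_inl_inr _ _ _).1 hz2
          have h1' := (auxDInc_adj_inr_inl _ _ _).1 hz1'
          have h2' := (auxDInc_adj_inl_inr _ _ _).1 hz2'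
          have hst : (s : Set V) ≠ ↑t := fun h =>
            hvx (congrArg Sum.inr (Subtype.ext h))
          have hst' : (s : Set V) ≠ ↑t' := fun h =>
            hvy (congrArg Sum.inr (Subtype.ext h))
          obtain ⟨σ, hσ, hσ1, hσ2⟩ := PT5 ↑s s.2 ↑t t.2 ↑s s.2 ↑t' t'.2 hst hst'
            ⟨c, h1, h2⟩ ⟨c', h1', h2'⟩
          refine ⟨liftPerm 𝓑 G hGacts ⟨σ, hσ⟩, ⟨⟨σ, hσ⟩, rfl⟩, ?_, ?_⟩
          · rw [liftPerm_inr]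
            exact congrArg Sum.inr (Subtype.ext hσ1)
          · rw [liftPerm_inr]
            exact congrArg Sum.inr (Subtype.ext hσ2)
        · -- i = 3 : antiflags based at a block
          rcases x with b | t
          swap
          · exact absurd (hparx.1 (by simp)) (by decide)
          rcases y with b' | t'
          swap
          · exact absurd (hpary.1 (by simp)) (by decide)
          have hnb : b ∉ (s : Set V) := by
            intro hmem2
            have h5 := hnadj _ _ ((hadjPB b s hmem2).symm)
            rw [hdx] at h5; omega
          have hnb' : b' ∉ (s : Set V) := by
            intro hmem2
            have h5 := hnadj _ _ ((hadjPB b' s hmem2).symm)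
            rw [hdy] at h5; omega
          obtain ⟨σ, hσ, hσb, hσimg⟩ := PT2 b ↑s s.2 b' ↑s s.2 hnb hnb'
          refine ⟨liftPerm 𝓑 G hGacts ⟨σ, hσ⟩, ⟨⟨σ, hσ⟩, rfl⟩, ?_, ?_⟩
          · rw [liftPerm_inr]
            exact congrArg Sum.inr (Subtype.ext hσimg)
          · rw [liftPerm_inl, hσb]
        · -- i = 4 : disjoint blocks
          rcases x with b | t
          · have h0 := hparx.2 (by decide); simp at h0
          rcases y with b' | t'
          · have h0 := hpary.2 (by decide); simp at h0
          have hst : (s : Set V) ≠ ↑t := fun h =>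
            hvx (congrArg Sum.inr (Subtype.ext h))
          have hst' : (s : Set V) ≠ ↑t' := fun h =>
            hvy (congrArg Sum.inr (Subtype.ext h))
          have hdisj : (s : Set V) ∩ ↑t = ∅ := by
            rw [Set.eq_empty_iff_forall_notMem]
            rintro c ⟨hc1, hc2⟩
            have h5 := hcn _ _ _ ((hadjPB c s hc1).symm) (hadjPB c t hc2)
            rw [hdx] at h5; omega
          have hdisj' : (s : Set V) ∩ ↑t' = ∅ := by
            rw [Set.eq_empty_iff_forall_notMem]
            rintro c ⟨hc1, hc2⟩
            have h5 := hcn _ _ _ ((hadjPB c s hc1).symm) (hadjPB c t' hc2)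
            rw [hdy] at h5; omega
          obtain ⟨σ, hσ, hσ1, hσ2⟩ := PT6 ↑s s.2 ↑t t.2 ↑s s.2 ↑t' t'.2 hst hst'
            hdisj hdisj'
          refine ⟨liftPerm 𝓑 G hGacts ⟨σ, hσ⟩, ⟨⟨σ, hσ⟩, rfl⟩, ?_, ?_⟩
          · rw [liftPerm_inr]
            exact congrArg Sum.inr (Subtype.ext hσ1)
          · rw [liftPerm_inr]
            exact congrArg Sum.inr (Subtype.ext hσ2)
end

section
/- Let Γ be a finite connected graph, let G ≤ Aut(Γ) be transitive on the edges of Γ, let N ⊴ G, and let r ≥ 2 be an integer. Then the G-normal quotient Γ_N is isomorphic to the star K_{1,r} if and only if Γ is bipartite with an ordered bipartition (B|B') such that Γ is r-starlike relative to N (that is, B is an N-orbit on vertices and B' is a union of exactly r N-orbits on vertices). -/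
open SimpleGraph

section AuxLemmas

variable {V : Type*}

private lemma mkq_eq_iff (N : Subgroup (Equiv.Perm V)) (x y : V) :
    Quotient.mk (orbitSetoid N) x = Quotient.mk (orbitSetoid N) y ↔ ∃ n ∈ N, n x = y :=
  ⟨fun h => Quotient.exact h, fun h => Quotient.sound h⟩

private lemma porbit_eq_iff (N : Subgroup (Equiv.Perm V)) (x y : V) :
    POrbit N x = POrbit N y ↔ ∃ n ∈ N, n x = y := by
  constructor
  · intro h
    have hy : y ∈ POrbit N y := ⟨1, N.one_mem, rfl⟩
    rw [← h] at hy; exact hy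
  · rintro ⟨n, hn, rfl⟩
    ext z
    constructor
    · rintro ⟨m, hm, rfl⟩
      exact ⟨m * n⁻¹, N.mul_mem hm (N.inv_mem hn), by
        simp [Equiv.Perm.mul_apply]⟩
    · rintro ⟨m, hm, rfl⟩
      exact ⟨m * n, N.mul_mem hm hn, Equiv.Perm.mul_apply m n x⟩

/-- In a connected graph, a vertex distinct from some other vertex has a neighbour. -/
private lemma exists_adj_of_ne {Γ : SimpleGraph V} (hconn : Γ.Connected) {u v : V}
    (huv : u ≠ v) : ∃ w, Γ.Adj u w := by
  obtain ⟨p⟩ := hconn.preconnected u v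
  cases p with
  | nil => exact absurd rfl huv
  | cons h _ => exact ⟨_, h⟩

end AuxLemmas

/-- **Proposition `starquo=starlike`**.  For a finite connected `G`-edge-transitive
graph `Γ` and `N ⊴ G ≤ Aut Γ`, the normal quotient `Γ_N` is isomorphic to the star
`K_{1,r}` if and only if `Γ` is bipartite with an ordered bipartition `(B|Bᶜ)` relative
to which it is `r`-starlike with respect to `N`. -/
theorem statement8 {V : Type*} [Fintype V] (Γ : SimpleGraph V) (hconn : Γ.Connected)
    (G N : Subgroup (Equiv.Perm V)) (hGaut : ∀ g ∈ G, IsGraphAut Γ g)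
    (hNG : N ≤ G) (hnorm : ∀ g ∈ G, ∀ n ∈ N, g * n * g⁻¹ ∈ N)
    (hedge : ∀ u v u' v' : V, Γ.Adj u v → Γ.Adj u' v' →
      ∃ g ∈ G, (g u = u' ∧ g v = v') ∨ (g u = v' ∧ g v = u'))
    (r : ℕ) (hr : 2 ≤ r) :
    Nonempty (quotGraph Γ N ≃g completeBipartiteGraph Unit (Fin r)) ↔
      ∃ B : Set V, IsBipartition Γ B ∧ IsStarlike Γ B N r := by
  classical
  constructor
  · -- forward direction: from the isomorphism to the star
    rintro ⟨φ⟩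
    set c : Quotient (orbitSetoid N) := φ.symm (Sum.inl ()) with hc
    set B : Set V := {v | Quotient.mk (orbitSetoid N) v = c} with hBdef
    have hinv : ∀ n ∈ N, ∀ v : V, n v ∈ B ↔ v ∈ B := by
      intro n hn v
      have h : Quotient.mk (orbitSetoid N) (n v) = Quotient.mk (orbitSetoid N) v :=
        Quotient.sound ⟨n⁻¹, N.inv_mem hn, by simp⟩
      simp only [hBdef, Set.mem_setOf_eq, h]
    have htransB : ∀ x ∈ B, ∀ y ∈ B, ∃ n ∈ N, n x = y := by
      intro x hx y hy
      exact Quotient.exact ((hx : _ = c).trans (hy : _ = c).symm)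
    have hmemB : ∀ v : V, v ∈ B ↔ φ (Quotient.mk (orbitSetoid N) v) = Sum.inl () := by
      intro v
      constructor
      · intro hv
        rw [(hv : _ = c), hc]
        exact φ.apply_symm_apply _
      · intro hv
        show Quotient.mk (orbitSetoid N) v = c
        rw [hc, ← hv, φ.symm_apply_apply]
    -- there is an edge of `Γ` with endpoints in distinct orbits
    have hKadj : (completeBipartiteGraph Unit (Fin r)).Adj (Sum.inl ())
        (Sum.inr (⟨0, by omega⟩ : Fin r)) := by simp
    have hq : (quotGraph Γ N).Adj (φ.symm (Sum.inl ()))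
        (φ.symm (Sum.inr (⟨0, by omega⟩ : Fin r))) := φ.symm.map_rel_iff.mpr hKadj
    have hne0 : φ.symm (Sum.inl ()) ≠ φ.symm (Sum.inr (⟨0, by omega⟩ : Fin r)) := hq.ne
    obtain ⟨-, hor⟩ := hq
    have hcrossedge : ∃ x y : V, Γ.Adj x y ∧
        Quotient.mk (orbitSetoid N) x ≠ Quotient.mk (orbitSetoid N) y := by
      rcases hor with ⟨x, y, hxy, hx, hy⟩ | ⟨x, y, hxy, hx, hy⟩
      · exact ⟨x, y, hxy, by rw [hx, hy]; exact hne0⟩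
      · exact ⟨x, y, hxy, by rw [hx, hy]; exact hne0.symm⟩
    obtain ⟨x0, y0, hxy0, hne0'⟩ := hcrossedge
    -- no edge of `Γ` lies within a single orbit
    have hcross : ∀ u v : V, Γ.Adj u v →
        Quotient.mk (orbitSetoid N) u ≠ Quotient.mk (orbitSetoid N) v := by
      intro u v huv heq
      obtain ⟨n, hn, hnv⟩ := (mkq_eq_iff N u v).mp heq
      obtain ⟨g, hg, hor'⟩ := hedge u v x0 y0 huv hxy0
      have hgu : Quotient.mk (orbitSetoid N) (g u) = Quotient.mk (orbitSetoid N) (g v) := by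
        refine Quotient.sound ⟨g * n * g⁻¹, hnorm g hg n hn, ?_⟩
        simp [Equiv.Perm.mul_apply, hnv]
      rcases hor' with ⟨h1, h2⟩ | ⟨h1, h2⟩
      · rw [h1, h2] at hgu; exact hne0' hgu
      · rw [h1, h2] at hgu; exact hne0' hgu.symm
    -- bipartition
    have hbip : IsBipartition Γ B := by
      intro u v huv
      have hqadj : (quotGraph Γ N).Adj (Quotient.mk (orbitSetoid N) u)
          (Quotient.mk (orbitSetoid N) v) :=
        ⟨hcross u v huv, Or.inl ⟨u, v, huv, rfl, rfl⟩⟩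
      have hK : (completeBipartiteGraph Unit (Fin r)).Adj
          (φ (Quotient.mk (orbitSetoid N) u)) (φ (Quotient.mk (orbitSetoid N) v)) :=
        φ.map_rel_iff.mpr hqadj
      rcases h1 : φ (Quotient.mk (orbitSetoid N) u) with a | i <;>
        rcases h2 : φ (Quotient.mk (orbitSetoid N) v) with b | j
      · rw [h1, h2] at hK; simp at hK
      · constructor
        · intro _
          intro hv
          rw [(hmemB v).mp hv] at h2; exact absurd h2 (by simp)
        · intro _
          exact (hmemB u).mpr (by rw [h1])
      · constructor
        · intro hu
          rw [(hmemB u).mp hu] at h1; exact absurd h1 (by simp)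
        · intro hv
          exact absurd ((hmemB v).mpr (by rw [h2])) hv
      · rw [h1, h2] at hK; simp at hK
    -- counting the orbits on `Bᶜ`
    have hwB : ∀ i : Fin r, (φ.symm (Sum.inr i)).out ∉ B := by
      intro i hi
      have := (hmemB _).mp hi
      rw [Quotient.out_eq, φ.apply_symm_apply] at this
      exact absurd this (by simp)
    set ψ : Fin r → {S : Set V | ∃ x ∈ Bᶜ, S = POrbit N x} := fun i =>
      ⟨POrbit N (φ.symm (Sum.inr i)).out, (φ.symm (Sum.inr i)).out, hwB i, rfl⟩ with hψ
    have hψbij : Function.Bijective ψ := by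
      constructor
      · intro i j hij
        have h1 : POrbit N (φ.symm (Sum.inr i)).out = POrbit N (φ.symm (Sum.inr j)).out :=
          congrArg Subtype.val hij
        have h2 : φ.symm (Sum.inr i) = φ.symm (Sum.inr j) := by
          rw [← Quotient.out_eq (φ.symm (Sum.inr i)), ← Quotient.out_eq (φ.symm (Sum.inr j))]
          exact Quotient.sound ((porbit_eq_iff N _ _).mp h1)
        have := φ.symm.toEquiv.injective h2
        exact Sum.inr_injective this
      · rintro ⟨S, x, hx, rfl⟩
        have hxc : φ (Quotient.mk (orbitSetoid N) x) ≠ Sum.inl () :=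
          fun h => hx ((hmemB x).mpr h)
        rcases h : φ (Quotient.mk (orbitSetoid N) x) with a | i
        · exact absurd (by rw [h]) hxc
        · refine ⟨i, ?_⟩
          have hmk : Quotient.mk (orbitSetoid N) (φ.symm (Sum.inr i)).out =
              Quotient.mk (orbitSetoid N) x := by
            rw [Quotient.out_eq, ← h, φ.symm_apply_apply]
          exact Subtype.ext ((porbit_eq_iff N _ _).mpr (Quotient.exact hmk))
    have hcount : {S : Set V | ∃ x ∈ Bᶜ, S = POrbit N x}.ncard = r := by
      rw [← Nat.card_coe_set_eq, ← Nat.card_congr (Equiv.ofBijective ψ hψbij),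
        Nat.card_eq_fintype_card, Fintype.card_fin]
    exact ⟨B, hbip, hinv, htransB, hcount⟩
  · -- backward direction: from starlike to the isomorphism
    rintro ⟨B, hbip, hinv, htransB, hcount⟩
    set 𝒪 : Set (Set V) := {S : Set V | ∃ x ∈ Bᶜ, S = POrbit N x} with h𝒪
    haveI : Finite (Set V) := inferInstance
    have h𝒪fin : 𝒪.Finite := Set.toFinite 𝒪
    have hcard : Nat.card ↥𝒪 = r := by rw [Nat.card_coe_set_eq, hcount]
    have e : ↥𝒪 ≃ Fin r := Finite.equivFinOfCardEq hcard
    -- orbits respect `B`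
    have hBorbit : ∀ u v : V, (∃ n ∈ N, n u = v) → (u ∈ B ↔ v ∈ B) := by
      rintro u v ⟨n, hn, rfl⟩
      exact (hinv n hn u).symm
    -- two distinct vertices outside `B`
    have h2orb : ∃ S₁ S₂, S₁ ∈ 𝒪 ∧ S₂ ∈ 𝒪 ∧ S₁ ≠ S₂ :=
      (Set.one_lt_ncard_iff h𝒪fin).mp (by omega)
    obtain ⟨S₁, S₂, ⟨x₁, hx₁, rfl⟩, ⟨x₂, hx₂, rfl⟩, hS12⟩ := h2orb
    have hx12 : x₁ ≠ x₂ := by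
      rintro rfl; exact hS12 rfl
    -- `B` is nonempty
    obtain ⟨y₁, hy₁adj⟩ := exists_adj_of_ne hconn hx12
    have hb₀ : y₁ ∈ B := by
      by_contra h
      exact hx₁ ((hbip x₁ y₁ hy₁adj).mpr h)
    -- every vertex outside `B` has a neighbour in `B`
    have hnbr : ∀ v ∉ B, ∃ y ∈ B, Γ.Adj v y := by
      intro v hv
      have hvy : v ≠ y₁ := fun h => hv (h ▸ hb₀)
      obtain ⟨w, hw⟩ := exists_adj_of_ne hconn hvy
      refine ⟨w, ?_, hw⟩
      by_contra h
      exact hv ((hbip v w hw).mpr h)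
    -- the map on vertices
    set fdef : V → Unit ⊕ Fin r := fun v =>
      if h : v ∈ B then Sum.inl () else Sum.inr (e ⟨POrbit N v, v, h, rfl⟩) with hfdef
    have hwd : ∀ v w : V, (∃ n ∈ N, n v = w) → fdef v = fdef w := by
      intro v w hvw
      have hiff := hBorbit v w hvw
      by_cases hv : v ∈ B
      · simp only [hfdef, dif_pos hv, dif_pos (hiff.mp hv)]
      · have hw' : w ∉ B := fun h => hv (hiff.mpr h)
        simp only [hfdef, dif_neg hv, dif_neg hw']
        exact congrArg _ (congrArg e (Subtype.ext ((porbit_eq_iff N v w).mpr hvw)))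
    set f : Quotient (orbitSetoid N) → Unit ⊕ Fin r := Quotient.lift fdef hwd with hf
    have hfmk : ∀ v : V, f (Quotient.mk (orbitSetoid N) v) = fdef v := fun _ => rfl
    have hbij : Function.Bijective f := by
      constructor
      · intro a b
        induction a using Quotient.ind with | _ u =>
        induction b using Quotient.ind with | _ v =>
        intro hab
        rw [hfmk, hfmk] at hab
        by_cases hu : u ∈ B <;> by_cases hv : v ∈ B
        · exact Quotient.sound (htransB u hu v hv)
        · simp only [hfdef, dif_pos hu, dif_neg hv] at hab; exact absurd hab (by simp)
        · simp only [hfdef, dif_neg hu, dif_pos hv] at hab; exact absurd hab (by simp)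
        · simp only [hfdef, dif_neg hu, dif_neg hv, Sum.inr.injEq] at hab
          have := e.injective hab
          have hPO : POrbit N u = POrbit N v := congrArg Subtype.val this
          exact Quotient.sound ((porbit_eq_iff N u v).mp hPO)
      · intro s
        rcases s with a | i
        · refine ⟨Quotient.mk (orbitSetoid N) y₁, ?_⟩
          rw [hfmk]
          simp only [hfdef, dif_pos hb₀]
        · obtain ⟨x, hx, hSx⟩ := (e.symm i).2
          refine ⟨Quotient.mk (orbitSetoid N) x, ?_⟩
          rw [hfmk]
          simp only [hfdef, dif_neg hx]
          congr 1
          have : (⟨POrbit N x, x, hx, rfl⟩ : ↥𝒪) = e.symm i := Subtype.ext hSx.symm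
          rw [this, e.apply_symm_apply]
    -- no edges inside `B` or inside `Bᶜ`
    have hnoBB : ∀ u v : V, u ∈ B → v ∈ B → ¬ Γ.Adj u v := by
      intro u v hu hv h
      exact (hbip u v h).mp hu hv
    have hnoCC : ∀ u v : V, u ∉ B → v ∉ B → ¬ Γ.Adj u v := by
      intro u v hu hv h
      exact hu ((hbip u v h).mpr hv)
    -- membership in `B` is constant on quotient classes
    have hclass : ∀ u x : V, Quotient.mk (orbitSetoid N) x = Quotient.mk (orbitSetoid N) u →
        (x ∈ B ↔ u ∈ B) := fun u x h => hBorbit x u (Quotient.exact h)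
    -- adjacency correspondence
    have hadj : ∀ u v : V, (completeBipartiteGraph Unit (Fin r)).Adj
        (f (Quotient.mk (orbitSetoid N) u)) (f (Quotient.mk (orbitSetoid N) v)) ↔
        (quotGraph Γ N).Adj (Quotient.mk (orbitSetoid N) u) (Quotient.mk (orbitSetoid N) v) := by
      intro u v
      rw [hfmk, hfmk]
      by_cases hu : u ∈ B <;> by_cases hv : v ∈ B
      · -- both in B : neither side holds
        simp only [hfdef, dif_pos hu, dif_pos hv]
        constructor
        · intro h; exact absurd h (by simp)
        · rintro ⟨hne, ⟨x, y, hxy, hxc, hyc⟩ | ⟨x, y, hxy, hxc, hyc⟩⟩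
          · exact absurd hxy (hnoBB x y ((hclass u x hxc).mpr hu) ((hclass v y hyc).mpr hv))
          · exact absurd hxy (hnoBB x y ((hclass v x hxc).mpr hv) ((hclass u y hyc).mpr hu))
      · -- u ∈ B, v ∉ B : both sides hold
        simp only [hfdef, dif_pos hu, dif_neg hv]
        have hne : Quotient.mk (orbitSetoid N) u ≠ Quotient.mk (orbitSetoid N) v := by
          intro h
          exact hv ((hclass v u h).mp hu)
        obtain ⟨y, hy, hvy⟩ := hnbr v hv
        obtain ⟨n, hn, hny⟩ := htransB y hy u hu
        have hadj' : Γ.Adj u (n v) := by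
          have := (hGaut n (hNG hn) v y).mpr hvy
          rw [hny] at this
          exact this.symm
        have hq : (quotGraph Γ N).Adj (Quotient.mk (orbitSetoid N) u)
            (Quotient.mk (orbitSetoid N) v) :=
          ⟨hne, Or.inl ⟨u, n v, hadj', rfl, Quotient.sound ⟨n⁻¹, N.inv_mem hn,
            by simp⟩⟩⟩
        simp only [hq, iff_true]
        simp
      · -- u ∉ B, v ∈ B : both sides hold
        simp only [hfdef, dif_neg hu, dif_pos hv]
        have hne : Quotient.mk (orbitSetoid N) u ≠ Quotient.mk (orbitSetoid N) v := by
          intro h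
          exact hu ((hclass u v h.symm).mp hv)
        obtain ⟨y, hy, huy⟩ := hnbr u hu
        obtain ⟨n, hn, hny⟩ := htransB y hy v hv
        have hadj' : Γ.Adj (n u) v := by
          have := (hGaut n (hNG hn) u y).mpr huy
          rw [hny] at this
          exact this
        have hq : (quotGraph Γ N).Adj (Quotient.mk (orbitSetoid N) u)
            (Quotient.mk (orbitSetoid N) v) :=
          ⟨hne, Or.inl ⟨n u, v, hadj', Quotient.sound ⟨n⁻¹, N.inv_mem hn,
            by simp⟩, rfl⟩⟩
        simp only [hq, iff_true]
        simp
      · -- both outside B : neither side holds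
        simp only [hfdef, dif_neg hu, dif_neg hv]
        constructor
        · intro h; exact absurd h (by simp)
        · rintro ⟨hne, ⟨x, y, hxy, hxc, hyc⟩ | ⟨x, y, hxy, hxc, hyc⟩⟩
          · exact absurd hxy (hnoCC x y (fun h => hu ((hclass u x hxc).mp h))
              (fun h => hv ((hclass v y hyc).mp h)))
          · exact absurd hxy (hnoCC x y (fun h => hv ((hclass v x hxc).mp h))
              (fun h => hu ((hclass u y hyc).mp h)))
    refine ⟨⟨Equiv.ofBijective f hbij, ?_⟩⟩
    intro a b
    induction a using Quotient.ind with | _ u =>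
    induction b using Quotient.ind with | _ v =>
    exact hadj u v
end
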